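/- arXiv:1107.1182 — 5 statements merged into one kernel-verified Lean document; each statement's English description precedes it below -/
import Mathlib

section
/- For every integer n ≥ 2 there exists a constant c > 0 (depending only on n) such that every number field K of degree n over ℚ contains a nonzero algebraic integer α ∈ 𝒪_K with trace Tr_{K/ℚ}(α) = 0 such that for every field embedding σ : K → ℂ one has |σ(α)| ≤ c · |d_K|^(1/(2(n−1))), where d_K is the discriminant of K. -/
open NumberField NumberField.InfinitePlace NumberField.mixedEmbedding Module
open scoped ENNReal NNReal Classical

-- Auxiliary lemma: there is a nonzero, non-rational algebraic integer all of whose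
-- conjugates are bounded by `2 ^ (2n+1) * |d_K| ^ (1/(2(n-1)))`.
private theorem aux_house (n : ℕ) (hn : 2 ≤ n) (K : Type) [Field K] [NumberField K]
    (hK : Module.finrank ℚ K = n) :
    ∃ a : NumberField.RingOfIntegers K, a ≠ 0 ∧ (∀ q : ℚ, (a : K) ≠ algebraMap ℚ K q) ∧
      ∀ σ : K →+* ℂ, ‖σ (a : K)‖ ≤
        2 ^ (2 * n + 1) * (|NumberField.discr K| : ℝ) ^ (1 / (2 * ((n : ℝ) - 1))) := by
  have hd0 : NumberField.discr K ≠ 0 := NumberField.discr_ne_zero K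
  have hd1 : (1 : ℝ) ≤ (|NumberField.discr K| : ℝ) := by
    exact_mod_cast Int.one_le_abs hd0
  set D : ℝ := (|NumberField.discr K| : ℝ) ^ (1 / (2 * ((n : ℝ) - 1))) with hDdef
  have hn1 : (0 : ℝ) < (n : ℝ) - 1 := by
    have : (2 : ℝ) ≤ n := by exact_mod_cast hn
    linarith
  have hD1 : 1 ≤ D := Real.one_le_rpow hd1 (by positivity)
  have hD0 : (0 : ℝ) ≤ D := zero_le_one.trans hD1
  set DD : ℝ≥0 := D.toNNReal with hDDdef
  have hDDcoe : (DD : ℝ) = D := Real.coe_toNNReal D hD0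
  have hDD1 : (1 : ℝ≥0) ≤ DD := by
    rw [← NNReal.coe_le_coe, hDDcoe, NNReal.coe_one]; exact hD1
  set B : ℝ≥0 := 2 ^ (2 * n) * DD with hBdef
  have hB1 : (1 : ℝ≥0) ≤ B := one_le_mul (one_le_pow₀ one_le_two) hDD1
  have hBcoe : (B : ℝ) = 2 ^ (2 * n) * D := by
    rw [hBdef]; push_cast [hDDcoe]; ring
  -- the exponent `2n(n-1)` bound
  obtain ⟨m, hm_eq, hm_ge⟩ : ∃ m : ℕ, 2 * n * (n - 1) = m ∧ n + 2 ≤ m := by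
    refine ⟨2 * n * (n - 1), rfl, ?_⟩
    calc n + 2 ≤ 2 * n := by omega
      _ = 2 * n * 1 := (mul_one _).symm
      _ ≤ 2 * n * (n - 1) := Nat.mul_le_mul_left _ (by omega)
  -- the square root of the discriminant is at most `DD ^ (n-1)`
  have hsq : NNReal.sqrt ‖NumberField.discr K‖₊ ≤ DD ^ (n - 1) := by
    rw [← NNReal.coe_le_coe, NNReal.coe_pow, hDDcoe, Real.coe_sqrt]
    have hcast : ((‖NumberField.discr K‖₊ : ℝ≥0) : ℝ) = (|NumberField.discr K| : ℝ) := by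
      rw [coe_nnnorm, Int.norm_eq_abs]
    rw [hcast]
    have hn1' : ((n - 1 : ℕ) : ℝ) = (n : ℝ) - 1 := by
      rw [Nat.cast_sub (by omega)]; norm_num
    have hDpow : D ^ (n - 1 : ℕ) = (|NumberField.discr K| : ℝ) ^ ((1 : ℝ) / 2) := by
      rw [hDdef, ← Real.rpow_natCast _ (n - 1), ← Real.rpow_mul (by positivity), hn1']
      congr 1
      field_simp
    rw [hDpow, Real.sqrt_eq_rpow]
  -- the Minkowski bound is at most `2 ^ n * DD ^ (n-1)`
  have hmb : minkowskiBound K 1 ≤ (2 : ℝ≥0∞) ^ n * ((DD : ℝ≥0∞)) ^ (n - 1) := by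
    rw [minkowskiBound, volume_fundamentalDomain_fractionalIdealLatticeBasis,
      Units.val_one, FractionalIdeal.absNorm_one, Rat.cast_one, ENNReal.ofReal_one, one_mul,
      volume_fundamentalDomain_latticeBasis, mixedEmbedding.finrank, hK]
    calc (2⁻¹ : ℝ≥0∞) ^ nrComplexPlaces K * (NNReal.sqrt ‖NumberField.discr K‖₊ : ℝ≥0∞) * 2 ^ n
        ≤ 1 * ((DD : ℝ≥0∞) ^ (n - 1)) * 2 ^ n := by
          gcongr
          · exact pow_le_one' (ENNReal.inv_le_one.mpr one_le_two) _
          · rw [← ENNReal.coe_pow, ENNReal.coe_le_coe]; exact hsq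
      _ = 2 ^ n * (DD : ℝ≥0∞) ^ (n - 1) := by ring
  have hDpos : (0 : ℝ) < D ^ (n - 1) := by positivity
  -- the final bound
  set M : ℝ := 2 ^ (2 * n + 1) * D with hMdef
  have hBM : (B : ℝ) ≤ M := by
    rw [hBcoe, hMdef, pow_succ]
    nlinarith [pow_pos (zero_lt_two (α := ℝ)) (2 * n)]
  by_cases hex : ∃ w : InfinitePlace K, IsReal w
  · -- there is a real place
    obtain ⟨w₁, hw₁⟩ := hex
    set f : InfinitePlace K → ℝ≥0 := fun w => if w = w₁ then 2⁻¹ else B with hf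
    have hfw₁ : f w₁ = 2⁻¹ := by simp [hf]
    have hfne : ∀ w : InfinitePlace K, w ≠ w₁ → f w = B := by
      intro w hw; simp [hf, hw]
    have hmult₁ : mult w₁ = 1 := by rw [mult, if_pos hw₁]
    have hprod : ∏ w : InfinitePlace K, f w ^ mult w = 2⁻¹ * B ^ (n - 1) := by
      rw [← Finset.prod_erase_mul _ _ (Finset.mem_univ w₁)]
      have h₂ : ∏ w ∈ Finset.univ.erase w₁, f w ^ mult w = B ^ (n - 1) := by
        rw [show (∏ w ∈ Finset.univ.erase w₁, f w ^ mult w)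
            = ∏ w ∈ Finset.univ.erase w₁, B ^ mult w from
          Finset.prod_congr rfl fun w hw => by
            rw [hfne w (Finset.ne_of_mem_erase hw)]]
        rw [Finset.prod_pow_eq_pow_sum]
        congr 1
        have hs := sum_mult_eq (K := K)
        rw [← Finset.sum_erase_add _ _ (Finset.mem_univ w₁), hmult₁, hK] at hs
        omega
      rw [h₂, hfw₁, hmult₁, pow_one, mul_comm]
    have hvol : minkowskiBound K 1 < MeasureTheory.volume (convexBodyLT K f) := by
      rw [convexBodyLT_volume, hprod]
      have hkey : (2 : ℝ≥0) ^ n * DD ^ (n - 1) < 2⁻¹ * B ^ (n - 1) := by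
        rw [← NNReal.coe_lt_coe]
        push_cast
        rw [hDDcoe, hBcoe, mul_pow, ← pow_mul, hm_eq]
        calc (2 : ℝ) ^ n * D ^ (n - 1) < 2 * (2 ^ n * D ^ (n - 1)) := by
              nlinarith [pow_pos (zero_lt_two (α := ℝ)) n]
          _ = 2⁻¹ * (2 ^ (n + 2) * D ^ (n - 1)) := by rw [pow_add]; ring
          _ ≤ 2⁻¹ * (2 ^ m * D ^ (n - 1)) := by
              have h2 : (2 : ℝ) ^ (n + 2) ≤ 2 ^ m := pow_le_pow_right₀ one_le_two hm_ge
              nlinarith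
      refine lt_of_le_of_lt hmb ?_
      calc (2 : ℝ≥0∞) ^ n * (DD : ℝ≥0∞) ^ (n - 1)
          = (((2 : ℝ≥0) ^ n * DD ^ (n - 1) : ℝ≥0) : ℝ≥0∞) := by push_cast; ring
        _ < ((2⁻¹ * B ^ (n - 1) : ℝ≥0) : ℝ≥0∞) := by exact_mod_cast hkey
        _ ≤ (convexBodyLTFactor K : ℝ≥0∞) * ((2⁻¹ * B ^ (n - 1) : ℝ≥0) : ℝ≥0∞) :=
            le_mul_of_one_le_left (by positivity)
              (by exact_mod_cast one_le_convexBodyLTFactor K)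
    obtain ⟨a, ha0, haw⟩ := exists_ne_zero_mem_ringOfIntegers_lt K (f := f) hvol
    have hKa : (a : K) ≠ 0 := fun h =>
      ha0 (NumberField.RingOfIntegers.ext (by rw [h]; exact (map_zero _).symm))
    have hirr : ∀ q : ℚ, (a : K) ≠ algebraMap ℚ K q := by
      intro q hq
      have hqint : IsIntegral ℤ ((algebraMap ℚ K) q) := by
        rw [← hq]; exact NumberField.RingOfIntegers.isIntegral_coe a
      rw [isIntegral_algebraMap_iff (algebraMap ℚ K).injective] at hqint
      obtain ⟨z, hz⟩ := IsIntegrallyClosed.isIntegral_iff.mp hqint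
      have hq0 : q ≠ 0 := by
        rintro rfl
        rw [map_zero] at hq
        exact hKa hq
      have hz0 : z ≠ 0 := by
        rintro rfl
        rw [eq_intCast, Int.cast_zero] at hz
        exact hq0 hz.symm
      have h1q : (1 : ℝ) ≤ |(q : ℝ)| := by
        rw [← hz, eq_intCast]
        push_cast
        exact_mod_cast Int.one_le_abs hz0
      have hlt := haw w₁
      rw [hfw₁] at hlt
      have hval : w₁ ((a : K)) = |(q : ℝ)| := by
        rw [hq, ← norm_embedding_eq,
          show (algebraMap ℚ K) q = ((q : ℚ) : K) from eq_ratCast (algebraMap ℚ K) q,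
          map_ratCast, ← Complex.ofReal_ratCast, Complex.norm_real, Real.norm_eq_abs]
      rw [hval] at hlt
      have h2 : ((2⁻¹ : ℝ≥0) : ℝ) = 1 / 2 := by norm_num
      rw [h2] at hlt
      linarith
    refine ⟨a, ha0, hirr, ?_⟩
    intro σ
    have h := haw (InfinitePlace.mk σ)
    have hfB : f (InfinitePlace.mk σ) ≤ B := by
      by_cases hcase : InfinitePlace.mk σ = w₁
      · rw [hcase, hfw₁]; exact le_trans (by norm_num) hB1
      · rw [hfne _ hcase]
    calc ‖σ ((a : K))‖ = (InfinitePlace.mk σ) ((a : K)) :=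
          (InfinitePlace.apply σ _).symm
      _ ≤ (f (InfinitePlace.mk σ) : ℝ) := le_of_lt h
      _ ≤ (B : ℝ) := by exact_mod_cast hfB
      _ ≤ M := hBM
  · -- there is no real place: all places are complex
    push_neg at hex
    have hne : Nonempty (InfinitePlace K) := inferInstance
    set w₀ : InfinitePlace K := Classical.arbitrary _ with hw₀def
    have hw₀ : IsComplex w₀ := not_isReal_iff_isComplex.mp (hex w₀)
    set f : InfinitePlace K → ℝ≥0 := fun w => if w = w₀ then NNReal.sqrt B else B with hf
    have hfw₀ : f w₀ = NNReal.sqrt B := by simp [hf]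
    have hfne : ∀ w : InfinitePlace K, w ≠ w₀ → f w = B := by
      intro w hw; simp [hf, hw]
    have hmult₀ : mult w₀ = 2 := by rw [mult, if_neg (hex w₀)]
    have hprod : ∏ w : InfinitePlace K, f w ^ mult w = B ^ (n - 1) := by
      rw [← Finset.prod_erase_mul _ _ (Finset.mem_univ w₀)]
      have h₂ : ∏ w ∈ Finset.univ.erase w₀, f w ^ mult w = B ^ (n - 2) := by
        rw [show (∏ w ∈ Finset.univ.erase w₀, f w ^ mult w)
            = ∏ w ∈ Finset.univ.erase w₀, B ^ mult w from
          Finset.prod_congr rfl fun w hw => by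
            rw [hfne w (Finset.ne_of_mem_erase hw)]]
        rw [Finset.prod_pow_eq_pow_sum]
        congr 1
        have hs := sum_mult_eq (K := K)
        rw [← Finset.sum_erase_add _ _ (Finset.mem_univ w₀), hmult₀, hK] at hs
        omega
      rw [h₂, hfw₀, hmult₀, NNReal.sq_sqrt, ← pow_succ]
      congr 1
      omega
    have hvol : minkowskiBound K 1 < MeasureTheory.volume (convexBodyLT' K f ⟨w₀, hw₀⟩) := by
      rw [convexBodyLT'_volume, hprod]
      have hkey : (2 : ℝ≥0) ^ n * DD ^ (n - 1) < B ^ (n - 1) := by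
        rw [← NNReal.coe_lt_coe]
        push_cast
        rw [hDDcoe, hBcoe, mul_pow, ← pow_mul, hm_eq]
        have h2 : (2 : ℝ) ^ n < 2 ^ m := pow_lt_pow_right₀ one_lt_two (by omega)
        nlinarith
      refine lt_of_le_of_lt hmb ?_
      calc (2 : ℝ≥0∞) ^ n * (DD : ℝ≥0∞) ^ (n - 1)
          = (((2 : ℝ≥0) ^ n * DD ^ (n - 1) : ℝ≥0) : ℝ≥0∞) := by push_cast; ring
        _ < ((B ^ (n - 1) : ℝ≥0) : ℝ≥0∞) := by exact_mod_cast hkey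
        _ ≤ (convexBodyLT'Factor K : ℝ≥0∞) * ((B ^ (n - 1) : ℝ≥0) : ℝ≥0∞) :=
            le_mul_of_one_le_left (by positivity)
              (by exact_mod_cast one_le_convexBodyLT'Factor K)
    obtain ⟨a, ha0, haw, haRe, haIm⟩ :=
      exists_ne_zero_mem_ringOfIntegers_lt' K ⟨w₀, hw₀⟩ hvol
    have hKa : (a : K) ≠ 0 := fun h =>
      ha0 (NumberField.RingOfIntegers.ext (by rw [h]; exact (map_zero _).symm))
    have hirr : ∀ q : ℚ, (a : K) ≠ algebraMap ℚ K q := by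
      intro q hq
      have hqint : IsIntegral ℤ ((algebraMap ℚ K) q) := by
        rw [← hq]; exact NumberField.RingOfIntegers.isIntegral_coe a
      rw [isIntegral_algebraMap_iff (algebraMap ℚ K).injective] at hqint
      obtain ⟨z, hz⟩ := IsIntegrallyClosed.isIntegral_iff.mp hqint
      have hq0 : q ≠ 0 := by
        rintro rfl
        rw [map_zero] at hq
        exact hKa hq
      have hz0 : z ≠ 0 := by
        rintro rfl
        rw [eq_intCast, Int.cast_zero] at hz
        exact hq0 hz.symm
      have h1q : (1 : ℝ) ≤ |(q : ℝ)| := by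
        rw [← hz, eq_intCast]
        push_cast
        exact_mod_cast Int.one_le_abs hz0
      have hemb : (w₀.embedding) ((a : K)) = ((q : ℝ) : ℂ) := by
        rw [hq, show (algebraMap ℚ K) q = ((q : ℚ) : K) from eq_ratCast (algebraMap ℚ K) q,
          map_ratCast, Complex.ofReal_ratCast]
      have haRe' : |((w₀.embedding) ((a : K))).re| < 1 := haRe
      rw [hemb] at haRe'
      simp only [Complex.ofReal_re] at haRe'
      linarith
    refine ⟨a, ha0, hirr, ?_⟩
    intro σ
    by_cases hww : InfinitePlace.mk σ = w₀
    · have habs : ‖σ ((a : K))‖ = w₀ ((a : K)) := by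
        rw [← hww]; exact (InfinitePlace.apply σ _).symm
      have hemb : w₀ ((a : K)) = ‖(w₀.embedding) ((a : K))‖ := by
        rw [← norm_embedding_eq]
      have hfsq : ((f w₀ : ℝ)) ^ 2 = (B : ℝ) := by
        rw [hfw₀, Real.coe_sqrt, Real.sq_sqrt (NNReal.coe_nonneg B)]
      have htri := Complex.norm_le_abs_re_add_abs_im ((w₀.embedding) ((a : K)))
      have hB1' : (1 : ℝ) ≤ (B : ℝ) := by exact_mod_cast hB1
      have haIm' : |((w₀.embedding) ((a : K))).im| < ((f w₀ : ℝ)) ^ 2 := haIm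
      have hstep : ‖σ ((a : K))‖ ≤ 1 + (B : ℝ) := by
        rw [habs, hemb]
        have h1 := le_of_lt haRe
        have h2 := le_of_lt haIm'
        rw [hfsq] at h2
        linarith
      refine le_trans hstep ?_
      rw [hMdef, hBcoe, pow_succ]
      have h2n : (1 : ℝ) ≤ 2 ^ (2 * n) := one_le_pow₀ one_le_two
      nlinarith
    · have h := haw (InfinitePlace.mk σ) hww
      have hfB : f (InfinitePlace.mk σ) = B := hfne _ hww
      calc ‖σ ((a : K))‖ = (InfinitePlace.mk σ) ((a : K)) :=
            (InfinitePlace.apply σ _).symm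
        _ ≤ (f (InfinitePlace.mk σ) : ℝ) := le_of_lt h
        _ = (B : ℝ) := by rw [hfB]
        _ ≤ M := hBM

/-- For every integer `n ≥ 2` there is a constant `c > 0` (depending only on `n`) such that
every number field `K` of degree `n` over `ℚ` contains a nonzero algebraic integer `α` of
trace zero with `|σ(α)| ≤ c · |d_K|^(1/(2(n−1)))` for every embedding `σ : K → ℂ`. -/
theorem exists_small_trace_zero_integer (n : ℕ) (hn : 2 ≤ n) :
    ∃ c : ℝ, 0 < c ∧
      ∀ (K : Type) [Field K] [NumberField K], Module.finrank ℚ K = n →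
        ∃ α : NumberField.RingOfIntegers K, α ≠ 0 ∧
          Algebra.trace ℚ K (α : K) = 0 ∧
          ∀ σ : K →+* ℂ, ‖σ (α : K)‖ ≤
            c * (|NumberField.discr K| : ℝ) ^ (1 / (2 * ((n : ℝ) - 1))) := by
  have hn0 : (0 : ℝ) < n := by exact_mod_cast (by omega : 0 < n)
  refine ⟨(n : ℝ) * 2 ^ (2 * n + 2), by positivity, ?_⟩
  intro K _ _ hK
  obtain ⟨a, ha0, hirr, hbound⟩ := aux_house n hn K hK
  set D : ℝ := (|NumberField.discr K| : ℝ) ^ (1 / (2 * ((n : ℝ) - 1))) with hDdef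
  have hd0 : NumberField.discr K ≠ 0 := NumberField.discr_ne_zero K
  have hd1 : (1 : ℝ) ≤ (|NumberField.discr K| : ℝ) := by exact_mod_cast Int.one_le_abs hd0
  have hn1 : (0 : ℝ) < (n : ℝ) - 1 := by
    have : (2 : ℝ) ≤ n := by exact_mod_cast hn
    linarith
  have hD1 : 1 ≤ D := Real.one_le_rpow hd1 (by positivity)
  have hD0 : (0 : ℝ) ≤ D := zero_le_one.trans hD1
  set M : ℝ := 2 ^ (2 * n + 1) * D with hMdef
  have hM0 : 0 ≤ M := by positivity
  -- the trace of `a` is an integer `t`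
  have hint : IsIntegral ℤ (Algebra.trace ℚ K ((a : K))) :=
    Algebra.isIntegral_trace (NumberField.RingOfIntegers.isIntegral_coe a)
  obtain ⟨t, ht⟩ := IsIntegrallyClosed.isIntegral_iff.mp hint
  rw [eq_intCast] at ht
  have hcast : ((((n : NumberField.RingOfIntegers K) * a -
      (t : NumberField.RingOfIntegers K) : NumberField.RingOfIntegers K)) : K)
      = (n : K) * (a : K) - (t : K) := by
    simp only [NumberField.RingOfIntegers.coe_eq_algebraMap, map_sub, map_mul, map_natCast,
      map_intCast]
  -- the element α
  refine ⟨(n : NumberField.RingOfIntegers K) * a - (t : NumberField.RingOfIntegers K),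
    ?_, ?_, ?_⟩
  · -- α ≠ 0
    intro h
    have h0 : (n : K) * (a : K) - (t : K) = 0 := by
      rw [← hcast, h]
      exact map_zero (algebraMap (NumberField.RingOfIntegers K) K)
    have hnK : (n : K) ≠ 0 := Nat.cast_ne_zero.mpr (by omega)
    apply hirr ((t : ℚ) / (n : ℚ))
    rw [eq_ratCast (algebraMap ℚ K)]
    push_cast
    field_simp
    linear_combination h0
  · -- trace is zero
    rw [hcast]
    have h1 : ((t : K)) = algebraMap ℚ K ((t : ℚ)) := by
      rw [eq_ratCast (algebraMap ℚ K)]; push_cast; ring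
    have h2 : (n : K) * (a : K) = (n : ℚ) • (a : K) := by
      rw [Algebra.smul_def, eq_ratCast (algebraMap ℚ K)]
      push_cast
      ring
    rw [map_sub, h1, Algebra.trace_algebraMap, hK, h2, map_smul, ht]
    rw [smul_eq_mul, nsmul_eq_mul]
    push_cast
    ring
  · -- the bound
    intro σ
    rw [hcast, map_sub, map_mul, map_natCast, map_intCast]
    -- bound on |t|
    have htsum : ((t : ℚ) : ℂ) = ∑ φ : K →ₐ[ℚ] ℂ, φ ((a : K)) := by
      have h := trace_eq_sum_embeddings (K := ℚ) (L := K) (E := ℂ) (x := ((a : K)))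
      rw [← ht] at h
      rw [← h, eq_ratCast (algebraMap ℚ ℂ)]
    have htabs : ‖(t : ℂ)‖ ≤ (n : ℝ) * M := by
      have hint' : ((t : ℤ) : ℂ) = (((t : ℚ)) : ℂ) := by push_cast; ring
      rw [hint', htsum]
      calc ‖∑ φ : K →ₐ[ℚ] ℂ, φ ((a : K))‖
          ≤ ∑ φ : K →ₐ[ℚ] ℂ, ‖φ ((a : K))‖ := norm_sum_le _ _
        _ ≤ ∑ _φ : K →ₐ[ℚ] ℂ, M := Finset.sum_le_sum (fun φ _ => hbound φ.toRingHom)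
        _ = (Fintype.card (K →ₐ[ℚ] ℂ)) * M := by
            rw [Finset.sum_const, nsmul_eq_mul, Finset.card_univ]
        _ = (n : ℝ) * M := by rw [AlgHom.card ℚ K ℂ, hK]
    have habsmul : ‖(n : ℂ) * σ ((a : K))‖ ≤ (n : ℝ) * M := by
      rw [norm_mul, Complex.norm_natCast]
      exact mul_le_mul_of_nonneg_left (hbound σ) (by positivity)
    have htri : ‖(n : ℂ) * σ ((a : K)) - (t : ℂ)‖ ≤
        ‖(n : ℂ) * σ ((a : K))‖ + ‖(t : ℂ)‖ := by
      rw [sub_eq_add_neg]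
      refine le_trans (norm_add_le _ _) ?_
      rw [norm_neg]
    have hfin : (n : ℝ) * M + (n : ℝ) * M = (n : ℝ) * 2 ^ (2 * n + 2) * D := by
      rw [hMdef, pow_succ]
      ring
    calc ‖(n : ℂ) * σ ((a : K)) - (t : ℂ)‖
        ≤ (n : ℝ) * M + (n : ℝ) * M := le_trans htri (add_le_add habsmul htabs)
      _ = (n : ℝ) * 2 ^ (2 * n + 2) * D := hfin
end

section
/- Let F be a field of characteristic zero and n ≥ 2 an integer. The subalgebra of the polynomial ring F[x_1, …, x_n] consisting of all polynomials invariant under every even permutation of the variables x_1, …, x_n is equal to the F-subalgebra generated by the elementary symmetric polynomials e_1, …, e_n together with the Vandermonde polynomial Δ = ∏_{1 ≤ i < j ≤ n} (x_i − x_j). -/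
set_option linter.unusedSectionVars false
set_option maxHeartbeats 1000000

open MvPolynomial

namespace AltInvAux

variable {F : Type} [Field F] [CharZero F] {n : ℕ}

/-- substitution sending `X j` to `X i` and fixing the other variables. -/
noncomputable def sb (i j : Fin n) : MvPolynomial (Fin n) F →ₐ[F] MvPolynomial (Fin n) F :=
  aeval (Function.update X j (X i))

lemma sb_X (i j k : Fin n) : sb (F := F) i j (X k) = if k = j then X i else X k := by
  simp only [sb, aeval_X, Function.update]
  split <;> simp_all

lemma dvd_sub_sb (i j : Fin n) (p : MvPolynomial (Fin n) F) :
    (X j - X i) ∣ p - sb i j p := by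
  induction p using MvPolynomial.induction_on with
  | C a => simp [sb]
  | add p q hp hq =>
      have : p + q - sb i j (p + q) = (p - sb i j p) + (q - sb i j q) := by
        rw [map_add]; ring
      rw [this]; exact dvd_add hp hq
  | mul_X p k hp =>
      have : p * X k - sb i j (p * X k)
          = (p - sb i j p) * X k + sb i j p * (X k - sb i j (X k)) := by
        rw [map_mul]; ring
      rw [this]
      refine dvd_add (hp.mul_right _) (Dvd.dvd.mul_left ?_ _)
      rw [sb_X]
      split
      · subst ‹k = j›; exact dvd_refl _
      · simp

lemma dvd_iff_sb_eq_zero (i j : Fin n) (p : MvPolynomial (Fin n) F) :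
    (X j - X i) ∣ p ↔ sb i j p = 0 := by
  constructor
  · rintro ⟨c, rfl⟩
    rw [map_mul]
    have : sb (F := F) i j (X j - X i) = 0 := by
      rw [map_sub, sb_X, sb_X, if_pos rfl]
      split <;> simp_all
    rw [this, zero_mul]
  · intro h
    have := dvd_sub_sb i j p
    rwa [h, sub_zero] at this

lemma prime_X_sub_X (i j : Fin n) (hij : i ≠ j) :
    Prime ((X j : MvPolynomial (Fin n) F) - X i) := by
  refine ⟨fun h => hij.symm (MvPolynomial.X_injective (sub_eq_zero.mp h)), ?_, ?_⟩
  · intro h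
    have : (X j - X i : MvPolynomial (Fin n) F) ∣ 1 := h.dvd
    rw [dvd_iff_sb_eq_zero, map_one] at this
    exact one_ne_zero this
  · intro a b hab
    rw [dvd_iff_sb_eq_zero] at hab ⊢
    rw [dvd_iff_sb_eq_zero (p := b)]
    rw [map_mul] at hab
    exact mul_eq_zero.mp hab

lemma not_associated (a b c d : Fin n) (hab : a < b) (hcd : c < d)
    (hne : (a, b) ≠ (c, d)) :
    ¬ Associated ((X a : MvPolynomial (Fin n) F) - X b) (X c - X d) := by
  intro h
  have hdvd : ((X c : MvPolynomial (Fin n) F) - X d) ∣ (X a - X b) := h.symm.dvd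
  rw [dvd_iff_sb_eq_zero, map_sub, sb_X, sb_X] at hdvd
  by_cases h1 : a = c <;> by_cases h2 : b = c <;> simp only [h1, h2, if_true, if_false,
    if_pos, if_neg] at hdvd
  · exact absurd (h1 ▸ h2) hab.ne'
  · have : d = b := MvPolynomial.X_injective (sub_eq_zero.mp hdvd)
    exact hne (by rw [h1, this])
  · have : a = d := MvPolynomial.X_injective (sub_eq_zero.mp hdvd)
    exact absurd (this ▸ (h2 ▸ hab)) (lt_asymm hcd)
  · exact hab.ne (MvPolynomial.X_injective (sub_eq_zero.mp hdvd))

/-- products of pairwise non-associated primes dividing `q` divide `q`. -/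
lemma prod_primes_dvd {α M : Type*} [CommMonoidWithZero M] [IsCancelMulZero M] (s : Finset α) (f : α → M)
    (hp : ∀ a ∈ s, Prime (f a))
    (hna : ∀ a ∈ s, ∀ b ∈ s, a ≠ b → ¬ Associated (f a) (f b))
    (q : M) (hdvd : ∀ a ∈ s, f a ∣ q) : (∏ a ∈ s, f a) ∣ q := by
  classical
  induction s using Finset.induction_on generalizing q with
  | empty => simp
  | @insert a s hanotin ih =>
      obtain ⟨q', rfl⟩ := hdvd a (Finset.mem_insert_self a s)
      rw [Finset.prod_insert hanotin]
      refine mul_dvd_mul_left _ (ih (fun b hb => hp b (Finset.mem_insert_of_mem hb))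
        (fun b hb c hc hbc => hna b (Finset.mem_insert_of_mem hb) c
          (Finset.mem_insert_of_mem hc) hbc) q' ?_)
      intro b hb
      have hbq : f b ∣ f a * q' := hdvd b (Finset.mem_insert_of_mem hb)
      have hb' : ¬ f b ∣ f a := by
        intro hd
        exact hna b (Finset.mem_insert_of_mem hb) a (Finset.mem_insert_self a s)
          (by rintro rfl; exact hanotin hb)
          ((hp b (Finset.mem_insert_of_mem hb)).associated_of_dvd
            (hp a (Finset.mem_insert_self a s)) hd)
      exact ((hp b (Finset.mem_insert_of_mem hb)).dvd_or_dvd hbq).resolve_left hb'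

variable (F n) in
noncomputable def Delta : MvPolynomial (Fin n) F :=
  ∏ q ∈ Finset.univ.filter (fun q : Fin n × Fin n => q.1 < q.2), (X q.1 - X q.2)

lemma prod_pairs {M : Type*} [CommMonoid M] (f : Fin n → Fin n → M) :
    ∏ q ∈ Finset.univ.filter (fun q : Fin n × Fin n => q.1 < q.2), f q.1 q.2
      = ∏ i : Fin n, ∏ j ∈ Finset.Ioi i, f i j := by
  rw [Finset.prod_sigma']
  refine Finset.prod_nbij' (fun q => ⟨q.1, q.2⟩) (fun x => (x.1, x.2)) ?_ ?_ ?_ ?_ ?_ <;>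
    simp [Finset.mem_sigma]

lemma delta_eq : Delta F n
    = (-1) ^ (Finset.univ.filter (fun q : Fin n × Fin n => q.1 < q.2)).card
      * (Matrix.vandermonde (X : Fin n → MvPolynomial (Fin n) F)).det := by
  rw [Matrix.det_vandermonde, ← prod_pairs, Delta, ← Finset.prod_const,
    ← Finset.prod_mul_distrib]
  exact Finset.prod_congr rfl fun q _ => by ring

lemma delta_ne_zero : Delta F n ≠ 0 := by
  rw [Delta]
  refine Finset.prod_ne_zero_iff.mpr fun q hq => ?_
  have hlt : q.1 < q.2 := (Finset.mem_filter.mp hq).2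
  exact (prime_X_sub_X q.2 q.1 hlt.ne').ne_zero

lemma rename_delta (σ : Equiv.Perm (Fin n)) :
    rename (⇑σ) (Delta F n)
      = ((Equiv.Perm.sign σ : ℤ) : MvPolynomial (Fin n) F) * Delta F n := by
  have hdet : rename (⇑σ) (Matrix.vandermonde (X : Fin n → MvPolynomial (Fin n) F)).det
      = ((Equiv.Perm.sign σ : ℤ) : MvPolynomial (Fin n) F)
        * (Matrix.vandermonde (X : Fin n → MvPolynomial (Fin n) F)).det := by
    rw [AlgHom.map_det (rename (⇑σ) : MvPolynomial (Fin n) F →ₐ[F] MvPolynomial (Fin n) F)]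
    have : (rename (⇑σ) : MvPolynomial (Fin n) F →ₐ[F] MvPolynomial (Fin n) F).mapMatrix
        (Matrix.vandermonde (X : Fin n → MvPolynomial (Fin n) F))
        = (Matrix.vandermonde (X : Fin n → MvPolynomial (Fin n) F)).submatrix (⇑σ) id := by
      ext i j
      simp [Matrix.vandermonde, map_pow, AlgHom.mapMatrix_apply]
    rw [this, Matrix.det_permute]
  rw [delta_eq, map_mul, map_pow, map_neg, map_one, hdet]
  ring

lemma rename_delta_even {σ : Equiv.Perm (Fin n)} (h : Equiv.Perm.sign σ = 1) :
    rename (⇑σ) (Delta F n) = Delta F n := by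
  rw [rename_delta, h]; norm_num

lemma rename_delta_odd {σ : Equiv.Perm (Fin n)} (h : Equiv.Perm.sign σ = -1) :
    rename (⇑σ) (Delta F n) = -Delta F n := by
  rw [rename_delta, h]; norm_num

/-- a symmetric polynomial lies in the algebra generated by `e₁, …, eₙ`. -/
lemma symm_mem_adjoin (g : MvPolynomial (Fin n) F) (hg : g.IsSymmetric) :
    g ∈ Algebra.adjoin F ((fun k => esymm (Fin n) F k) '' (Set.Icc 1 n)) := by
  obtain ⟨q, hq⟩ := esymmAlgHom_fin_surjective (R := F) (n := n) (le_refl n)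
    ⟨g, hg⟩
  have hg' : g = aeval (fun i : Fin n => esymm (Fin n) F (i + 1)) q := by
    rw [← esymmAlgHom_apply, hq]
  have hmem : g ∈ (aeval (fun i : Fin n => esymm (Fin n) F (i + 1))).range := ⟨q, hg'.symm⟩
  rw [← Algebra.adjoin_range_eq_range_aeval] at hmem
  refine Algebra.adjoin_mono ?_ hmem
  rintro _ ⟨i, rfl⟩
  exact ⟨i + 1, ⟨Nat.le_add_left 1 i, Nat.succ_le_of_lt i.isLt⟩, rfl⟩

end AltInvAux

open AltInvAux

/-- Over a field of characteristic zero, the `Aₙ`-invariant polynomials in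
`F[x₁, …, xₙ]` form exactly the `F`-subalgebra generated by the elementary symmetric
polynomials `e₁, …, eₙ` together with the Vandermonde polynomial `∏_{i<j} (xᵢ − xⱼ)`. -/
theorem alternating_invariants_eq_adjoin (F : Type) [Field F] [CharZero F]
    (n : ℕ) (hn : 2 ≤ n) :
    {p : MvPolynomial (Fin n) F |
        ∀ σ : Equiv.Perm (Fin n), σ ∈ alternatingGroup (Fin n) → rename (⇑σ) p = p} =
      ↑(Algebra.adjoin F
        ((fun k => esymm (Fin n) F k) '' (Set.Icc 1 n) ∪
          {∏ q ∈ Finset.univ.filter (fun q : Fin n × Fin n => q.1 < q.2),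
            (X q.1 - X q.2)})) := by
  classical
  have hDelta : (∏ q ∈ Finset.univ.filter (fun q : Fin n × Fin n => q.1 < q.2),
      (X q.1 - X q.2)) = Delta F n := rfl
  set S : Set (MvPolynomial (Fin n) F) :=
    (fun k => esymm (Fin n) F k) '' (Set.Icc 1 n) ∪ {Delta F n} with hS
  rw [hDelta]
  ext p
  simp only [Set.mem_setOf_eq, SetLike.mem_coe]
  constructor
  · -- the hard direction
    intro hinv
    set i0 : Fin n := ⟨0, by omega⟩
    set i1 : Fin n := ⟨1, by omega⟩
    have h01 : i0 ≠ i1 := by simp [i0, i1, Fin.ext_iff]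
    set τ : Equiv.Perm (Fin n) := Equiv.swap i0 i1 with hτ
    have hsτ : Equiv.Perm.sign τ = -1 := Equiv.Perm.sign_swap h01
    -- behaviour of p under arbitrary permutations
    have key : ∀ σ : Equiv.Perm (Fin n),
        rename (⇑σ) p = if Equiv.Perm.sign σ = 1 then p else rename (⇑τ) p := by
      intro σ
      rcases Int.units_eq_one_or (Equiv.Perm.sign σ) with hs | hs
      · rw [if_pos hs]
        exact hinv σ (Equiv.Perm.mem_alternatingGroup.mpr hs)
      · rw [if_neg (by rw [hs]; decide)]
        have h1 : Equiv.Perm.sign (τ⁻¹ * σ) = 1 := by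
          rw [map_mul, map_inv, hsτ, hs]; decide
        have h2 : rename (⇑(τ⁻¹ * σ)) p = p :=
          hinv _ (Equiv.Perm.mem_alternatingGroup.mpr h1)
        calc rename (⇑σ) p = rename (⇑(τ * (τ⁻¹ * σ))) p := by rw [mul_inv_cancel_left]
          _ = rename (⇑τ ∘ ⇑(τ⁻¹ * σ)) p := by rw [Equiv.Perm.coe_mul]
          _ = rename (⇑τ) (rename (⇑(τ⁻¹ * σ)) p) := (rename_rename _ _ p).symm
          _ = rename (⇑τ) p := by rw [h2]
    set r : MvPolynomial (Fin n) F := rename (⇑τ) p with hr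
    set pp : MvPolynomial (Fin n) F := C (2⁻¹ : F) * (p + r) with hpp
    set pm : MvPolynomial (Fin n) F := C (2⁻¹ : F) * (p - r) with hpm
    -- renaming pp and pm
    have hrenpm : ∀ σ : Equiv.Perm (Fin n),
        rename (⇑σ) pm = if Equiv.Perm.sign σ = 1 then pm else -pm := by
      intro σ
      have hστ : rename (⇑σ) r = rename (⇑(σ * τ)) p := by
        rw [hr, rename_rename, Equiv.Perm.coe_mul]
      have hsign : Equiv.Perm.sign (σ * τ) = - Equiv.Perm.sign σ := by
        rw [map_mul, hsτ, mul_neg, mul_one]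
      rcases Int.units_eq_one_or (Equiv.Perm.sign σ) with hs | hs
      · rw [if_pos hs, hpm, map_mul, map_sub, rename_C, key σ, if_pos hs, hστ, key (σ * τ),
          if_neg (by rw [hsign, hs]; decide)]
      · rw [if_neg (by rw [hs]; decide), hpm, map_mul, map_sub, rename_C, key σ,
          if_neg (by rw [hs]; decide), hστ, key (σ * τ), if_pos (by rw [hsign, hs]; decide)]
        ring
    have hrenpp : pp.IsSymmetric := by
      intro σ
      have hστ : rename (⇑σ) r = rename (⇑(σ * τ)) p := by
        rw [hr, rename_rename, Equiv.Perm.coe_mul]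
      have hsign : Equiv.Perm.sign (σ * τ) = - Equiv.Perm.sign σ := by
        rw [map_mul, hsτ, mul_neg, mul_one]
      rcases Int.units_eq_one_or (Equiv.Perm.sign σ) with hs | hs
      · rw [hpp, map_mul, map_add, rename_C, key σ, if_pos hs, hστ, key (σ * τ),
          if_neg (by rw [hsign, hs]; decide)]
      · rw [hpp, map_mul, map_add, rename_C, key σ, if_neg (by rw [hs]; decide), hστ,
          key (σ * τ), if_pos (by rw [hsign, hs]; decide)]
        ring
    -- pm is divisible by Delta
    have hdvd : Delta F n ∣ pm := by
      rw [Delta]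
      refine prod_primes_dvd _ _ (fun q hq => ?_) (fun q hq q' hq' hne => ?_) pm
        (fun q hq => ?_)
      · have hlt : q.1 < q.2 := (Finset.mem_filter.mp hq).2
        exact prime_X_sub_X q.2 q.1 hlt.ne'
      · have hlt : q.1 < q.2 := (Finset.mem_filter.mp hq).2
        have hlt' : q'.1 < q'.2 := (Finset.mem_filter.mp hq').2
        exact not_associated q.1 q.2 q'.1 q'.2 hlt hlt'
          (by simpa [Prod.ext_iff] using hne)
      · have hlt : q.1 < q.2 := (Finset.mem_filter.mp hq).2
        -- X q.1 - X q.2 ∣ pm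
        rw [dvd_iff_sb_eq_zero q.2 q.1]
        have hswap : rename (⇑(Equiv.swap q.1 q.2)) pm = -pm := by
          rw [hrenpm, if_neg (by rw [Equiv.Perm.sign_swap hlt.ne]; decide)]
        have hcomp : (Function.update X q.1 (X q.2) : Fin n → MvPolynomial (Fin n) F)
            ∘ ⇑(Equiv.swap q.1 q.2) = Function.update X q.1 (X q.2) := by
          funext k
          rcases eq_or_ne k q.1 with rfl | hk1
          · simp [Equiv.swap_apply_left, Function.update, hlt.ne']
          · rcases eq_or_ne k q.2 with rfl | hk2
            · simp [Equiv.swap_apply_right, Function.update, hlt.ne]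
            · rw [Function.comp_apply, Equiv.swap_apply_of_ne_of_ne hk1 hk2]
        have : sb q.2 q.1 pm = sb (F := F) q.2 q.1 (-pm) := by
          conv_rhs => rw [← hswap]
          rw [sb, aeval_rename, hcomp]
        rw [map_neg] at this
        have h2 : (2 : MvPolynomial (Fin n) F) * sb q.2 q.1 pm = 0 := by
          rw [two_mul]; nth_rewrite 2 [this]; ring
        rcases mul_eq_zero.mp h2 with h | h
        · exact absurd h two_ne_zero
        · exact h
    obtain ⟨t, ht⟩ := hdvd
    -- t is symmetric
    have htsymm : t.IsSymmetric := by
      intro σ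
      have hren : rename (⇑σ) pm = if Equiv.Perm.sign σ = 1 then pm else -pm := hrenpm σ
      rcases Int.units_eq_one_or (Equiv.Perm.sign σ) with hs | hs
      · have : Delta F n * rename (⇑σ) t = Delta F n * t := by
          have := hren
          rw [if_pos hs] at this
          calc Delta F n * rename (⇑σ) t
              = rename (⇑σ) (Delta F n) * rename (⇑σ) t := by rw [rename_delta_even hs]
            _ = rename (⇑σ) (Delta F n * t) := (map_mul _ _ _).symm
            _ = rename (⇑σ) pm := by rw [← ht]
            _ = pm := by rw [this]
            _ = Delta F n * t := ht
        exact mul_left_cancel₀ delta_ne_zero this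
      · have : Delta F n * rename (⇑σ) t = Delta F n * t := by
          have h' := hren
          rw [if_neg (by rw [hs]; decide)] at h'
          have : -(Delta F n) * rename (⇑σ) t = -(Delta F n * t) := by
            calc -(Delta F n) * rename (⇑σ) t
                = rename (⇑σ) (Delta F n) * rename (⇑σ) t := by rw [rename_delta_odd hs]
              _ = rename (⇑σ) (Delta F n * t) := (map_mul _ _ _).symm
              _ = rename (⇑σ) pm := by rw [← ht]
              _ = -pm := h'
              _ = -(Delta F n * t) := by rw [ht]
          linear_combination -this
        exact mul_left_cancel₀ delta_ne_zero this
    -- assemble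
    have hsum : p = pp + pm := by
      rw [hpp, hpm]
      have h2 : (C (2⁻¹ : F) : MvPolynomial (Fin n) F) + C (2⁻¹ : F) = 1 := by
        rw [← C_add]
        norm_num
      linear_combination (-p : MvPolynomial (Fin n) F) * h2
    rw [hsum]
    refine Subalgebra.add_mem _ ?_ ?_
    · exact Algebra.adjoin_mono Set.subset_union_left (symm_mem_adjoin pp hrenpp)
    · rw [ht]
      refine Subalgebra.mul_mem _ ?_ ?_
      · exact Algebra.subset_adjoin (Set.mem_union_right _ rfl)
      · exact Algebra.adjoin_mono Set.subset_union_left (symm_mem_adjoin t htsymm)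
  · -- the easy direction
    intro hp σ hσ
    have hsign : Equiv.Perm.sign σ = 1 := Equiv.Perm.mem_alternatingGroup.mp hσ
    have hle : Algebra.adjoin F S ≤
        AlgHom.equalizer (rename (⇑σ) : MvPolynomial (Fin n) F →ₐ[F] MvPolynomial (Fin n) F)
          (AlgHom.id F (MvPolynomial (Fin n) F)) := by
      rw [Algebra.adjoin_le_iff]
      rintro x (⟨k, _, rfl⟩ | hx)
      · exact esymm_isSymmetric (Fin n) F k σ
      · rw [Set.mem_singleton_iff] at hx
        subst hx
        exact rename_delta_even hsign
    exact hle hp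
end

section
/- Let m ≥ 2 be an even integer. The set W ⊆ ℂ^m of tuples (b_1, …, b_m) such that the monic polynomial x^m + b_1 x^(m−1) + ⋯ + b_m is the square of a polynomial in ℂ[x] is a Zariski-closed subset of ℂ^m (i.e., W is the common zero locus of an ideal of polynomials in ℂ[b_1, …, b_m]), and the Krull dimension of the quotient ring ℂ[b_1, …, b_m]/I(W), where I(W) is the ideal of all polynomials vanishing on W, equals m/2. -/
namespace SqLocus
open MvPolynomial Finset Order

variable (n : ℕ)

noncomputable def A (d : ℕ) : MvPolynomial (Fin n) ℂ :=
  if h : d < n then X ⟨n - 1 - d, by omega⟩ else if d = n then 1 else 0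

lemma A_gt {d : ℕ} (h : n < d) : A n d = 0 := by
  rw [A, dif_neg (by omega), if_neg (by omega)]

lemma A_n : A n n = 1 := by simp [A]

lemma A_lt {d : ℕ} (h : d < n) : A n d = X ⟨n - 1 - d, by omega⟩ := by
  simp [A, h]

noncomputable def S (j : Fin (2 * n)) : MvPolynomial (Fin n) ℂ :=
  ∑ p ∈ Finset.HasAntidiagonal.antidiagonal (2 * n - 1 - (j : ℕ)), A n p.1 * A n p.2

noncomputable def σf (c : Fin n → ℂ) : Fin (2 * n) → ℂ := fun j => eval c (S n j)

noncomputable def qpoly (c : Fin n → ℂ) : Polynomial ℂ :=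
  ∑ d ∈ Finset.range (n + 1), Polynomial.C (eval c (A n d)) * Polynomial.X ^ d

lemma qpoly_coeff (c : Fin n → ℂ) (d : ℕ) :
    (qpoly n c).coeff d = eval c (A n d) := by
  rw [qpoly, Polynomial.finset_sum_coeff]
  simp only [Polynomial.coeff_C_mul, Polynomial.coeff_X_pow, mul_ite, mul_one, mul_zero]
  rw [Finset.sum_ite_eq (Finset.range (n + 1)) d (fun e => eval c (A n e))]
  split_ifs with h
  · rfl
  · rw [A_gt n (by simpa using h)]; simp

lemma sq_coeff (c : Fin n → ℂ) (t : ℕ) :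
    ((qpoly n c) ^ 2).coeff t
      = ∑ p ∈ Finset.HasAntidiagonal.antidiagonal t, eval c (A n p.1) * eval c (A n p.2) := by
  rw [sq, Polynomial.coeff_mul]
  simp [qpoly_coeff]

/-- The monic polynomial with coefficient tuple `b`. -/
noncomputable def Pb (m : ℕ) (b : Fin m → ℂ) : Polynomial ℂ :=
  (Polynomial.X : Polynomial ℂ) ^ m +
    ∑ i : Fin m, Polynomial.C (b i) *
      (Polynomial.X : Polynomial ℂ) ^ (m - ((i : ℕ) + 1))

lemma Pb_coeff (m : ℕ) (b : Fin m → ℂ) (t : ℕ) :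
    (Pb m b).coeff t =
      if h : t < m then b ⟨m - 1 - t, by omega⟩ else if t = m then 1 else 0 := by
  rw [Pb, Polynomial.coeff_add, Polynomial.coeff_X_pow, Polynomial.finset_sum_coeff]
  simp only [Polynomial.coeff_C_mul, Polynomial.coeff_X_pow, mul_ite, mul_one, mul_zero]
  by_cases ht : t < m
  · rw [dif_pos ht, if_neg (by omega), zero_add,
      Finset.sum_eq_single (⟨m - 1 - t, by omega⟩ : Fin m)]
    · rw [if_pos (by simp; omega)]
    · intro i _ hi
      rw [if_neg]
      intro hti
      apply hi
      apply Fin.ext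
      show (i : ℕ) = m - 1 - t
      have := i.isLt
      omega
    · intro h; exact absurd (Finset.mem_univ _) h
  · rw [dif_neg ht, Finset.sum_eq_zero, add_zero]
    intro i _
    rw [if_neg (by omega)]

lemma eval_A_gt (c : Fin n → ℂ) {d : ℕ} (h : n < d) : eval c (A n d) = 0 := by
  rw [A_gt n h]; simp

/-- Key identity: the parametrized tuple gives exactly the square `(qpoly c)^2`. -/
lemma Pb_σf (hn : 1 ≤ n) (c : Fin n → ℂ) :
    Pb (2 * n) (σf n c) = (qpoly n c) ^ 2 := by
  ext t
  rw [Pb_coeff, sq_coeff]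
  by_cases h1 : t < 2 * n
  · rw [dif_pos h1]
    show σf n c _ = _
    rw [σf, S]
    have harg : 2 * n - 1 - ((⟨2 * n - 1 - t, by omega⟩ : Fin (2*n)) : ℕ) = t := by
      simp; omega
    rw [harg, map_sum]
    simp
  · rw [dif_neg h1]
    by_cases h2 : t = 2 * n
    · rw [if_pos h2]
      subst h2
      rw [Finset.sum_eq_single ((n, n) : ℕ × ℕ)]
      · rw [A_n]; simp
      · rintro ⟨d, e⟩ hde hne
        rw [Finset.HasAntidiagonal.mem_antidiagonal] at hde
        have : n < d ∨ n < e := by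
          rcases lt_trichotomy d n with h | h | h
          · right; omega
          · exfalso; apply hne; simp at hde ⊢; omega
          · left; exact h
        rcases this with h | h
        · rw [eval_A_gt n c h, zero_mul]
        · rw [eval_A_gt n c h, mul_zero]
      · intro h
        exact absurd (Finset.HasAntidiagonal.mem_antidiagonal.mpr (by omega)) h
    · rw [if_neg h2, eq_comm, Finset.sum_eq_zero]
      rintro ⟨d, e⟩ hde
      rw [Finset.HasAntidiagonal.mem_antidiagonal] at hde
      have : n < d ∨ n < e := by omega
      rcases this with h | h
      · rw [eval_A_gt n c h, zero_mul]
      · rw [eval_A_gt n c h, mul_zero]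

lemma Pb_natDegree (m : ℕ) (hm : 1 ≤ m) (b : Fin m → ℂ) :
    (Pb m b).natDegree = m ∧ (Pb m b).leadingCoeff = 1 := by
  have h1 : (Pb m b).coeff m = 1 := by
    rw [Pb_coeff]
    rw [dif_neg (by omega), if_pos rfl]
  have hle : (Pb m b).natDegree ≤ m := by
    apply Polynomial.natDegree_le_iff_coeff_eq_zero.mpr
    intro t ht
    rw [Pb_coeff, dif_neg (by omega), if_neg (by omega)]
  have hge : m ≤ (Pb m b).natDegree :=
    Polynomial.le_natDegree_of_ne_zero (by rw [h1]; exact one_ne_zero)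
  have hdeg : (Pb m b).natDegree = m := le_antisymm hle hge
  refine ⟨hdeg, ?_⟩
  rw [Polynomial.leadingCoeff, hdeg, h1]

/-- extracting the tuple back from the polynomial. -/
lemma Pb_inj {m : ℕ} (hm : 1 ≤ m) {b b' : Fin m → ℂ} (h : Pb m b = Pb m b') :
    b = b' := by
  funext j
  have hj := j.isLt
  have := congrArg (fun p => Polynomial.coeff p (m - 1 - (j : ℕ))) h
  simp only [Pb_coeff] at this
  rw [dif_pos (by omega), dif_pos (by omega)] at this
  have harg : (⟨m - 1 - (m - 1 - (j:ℕ)), by omega⟩ : Fin m) = j := Fin.ext (by simp; omega)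
  rwa [harg] at this

lemma W_eq_range (hn : 1 ≤ n) :
    {b : Fin (2 * n) → ℂ | ∃ q : Polynomial ℂ, Pb (2 * n) b = q ^ 2}
      = Set.range (σf n) := by
  apply Set.Subset.antisymm
  · rintro b ⟨q, hq⟩
    obtain ⟨hdeg, hlead⟩ := Pb_natDegree (2 * n) (by omega) b
    have hq0 : q ≠ 0 := by
      intro h
      rw [h] at hq
      simp only [zero_pow, ne_eq, OfNat.ofNat_ne_zero, not_false_eq_true] at hq
      have := congrArg Polynomial.natDegree hq
      rw [hdeg] at this
      simp at this
      omega
    have hqdeg : q.natDegree = n := by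
      have := congrArg Polynomial.natDegree hq
      rw [hdeg, Polynomial.natDegree_pow] at this
      omega
    have hu : q.leadingCoeff ^ 2 = 1 := by
      have := congrArg Polynomial.leadingCoeff hq
      rw [hlead, Polynomial.leadingCoeff_pow] at this
      exact this.symm
    set u := q.leadingCoeff with hu_def
    have hune : u ≠ 0 := by
      intro h; rw [h] at hu; simp at hu
    set q' := Polynomial.C u * q with hq'_def
    have hq'sq : q' ^ 2 = q ^ 2 := by
      rw [hq'_def, mul_pow, ← Polynomial.C_pow, hu]
      simp
    have hq'deg : q'.natDegree = n := by
      rw [hq'_def, Polynomial.natDegree_C_mul hune, hqdeg]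
    have hq'monic : q'.Monic := by
      rw [Polynomial.Monic, hq'_def, Polynomial.leadingCoeff_mul, Polynomial.leadingCoeff_C]
      show u * u = 1
      rw [← sq]; exact hu
    set c : Fin n → ℂ := fun i => q'.coeff (n - 1 - (i : ℕ)) with hc
    have hq'eq : q' = qpoly n c := by
      ext d
      rw [qpoly_coeff]
      by_cases hd : d < n
      · rw [A_lt n hd]
        simp only [eval_X, hc]
        congr 1
        omega
      · by_cases hd2 : d = n
        · subst hd2
          rw [A_n, map_one, ← hq'deg]
          exact hq'monic.coeff_natDegree
        · rw [Polynomial.coeff_eq_zero_of_natDegree_lt (by omega)]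
          rw [A_gt n (by omega), map_zero]
    refine ⟨c, ?_⟩
    apply (Pb_inj (m := 2 * n) (by omega) ?_).symm
    rw [Pb_σf n hn c, hq, ← hq'sq, hq'eq]
  · rintro b ⟨c, rfl⟩
    exact ⟨qpoly n c, Pb_σf n hn c⟩

lemma eval_aeval {σ' τ : Type*} (g : σ' → MvPolynomial τ ℂ) (x : τ → ℂ)
    (p : MvPolynomial σ' ℂ) :
    eval x (aeval g p) = eval (fun s => eval x (g s)) p := by
  induction p using MvPolynomial.induction_on with
  | C => simp
  | add p q hp hq => simp only [map_add, hp, hq]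
  | mul_X p i h => simp only [map_mul, aeval_X, eval_X, h]

lemma X_mem_range (K : ℕ) (hK : K < n) :
    X ⟨K, hK⟩ ∈ (aeval (S n) : MvPolynomial (Fin (2 * n)) ℂ →ₐ[ℂ] MvPolynomial (Fin n) ℂ).range := by
  induction K using Nat.strong_induction_on with
  | _ K IH =>
  set T := (aeval (S n) : MvPolynomial (Fin (2 * n)) ℂ →ₐ[ℂ] MvPolynomial (Fin n) ℂ).range with hT
  set jK : Fin (2 * n) := ⟨K, by omega⟩ with hjK
  set f : ℕ × ℕ → MvPolynomial (Fin n) ℂ := fun p => A n p.1 * A n p.2 with hf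
  set s : Finset (ℕ × ℕ) := Finset.HasAntidiagonal.antidiagonal (2 * n - 1 - K) with hs
  have h1mem : ((n, n - 1 - K) : ℕ × ℕ) ∈ s := by
    rw [hs, Finset.HasAntidiagonal.mem_antidiagonal]; omega
  have hne : ((n - 1 - K, n) : ℕ × ℕ) ≠ (n, n - 1 - K) := by
    intro h
    have := congrArg Prod.fst h
    simp at this; omega
  have h2mem : ((n - 1 - K, n) : ℕ × ℕ) ∈ s.erase (n, n - 1 - K) := by
    rw [Finset.mem_erase]
    exact ⟨hne, by rw [hs, Finset.HasAntidiagonal.mem_antidiagonal]; omega⟩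
  set rest : MvPolynomial (Fin n) ℂ :=
    ∑ p ∈ (s.erase (n, n - 1 - K)).erase (n - 1 - K, n), f p with hrest
  have hXK : A n (n - 1 - K) = X ⟨K, hK⟩ := by
    rw [A_lt n (show n - 1 - K < n by omega)]
    congr 1
    exact Fin.ext (by simp; omega)
  have hsplit : S n jK = X ⟨K, hK⟩ + (X ⟨K, hK⟩ + rest) := by
    rw [S, hjK]
    have harg : 2 * n - 1 - ((⟨K, by omega⟩ : Fin (2 * n)) : ℕ) = 2 * n - 1 - K := by simp
    rw [harg, ← hs, ← Finset.add_sum_erase s f h1mem, ← Finset.add_sum_erase _ f h2mem, ← hrest]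
    have e1 : f (n, n - 1 - K) = X ⟨K, hK⟩ := by rw [hf]; simp only; rw [A_n, hXK, one_mul]
    have e2 : f (n - 1 - K, n) = X ⟨K, hK⟩ := by rw [hf]; simp only; rw [A_n, hXK, mul_one]
    rw [e1, e2]
  have hrest_mem : rest ∈ T := by
    apply Subalgebra.sum_mem
    rintro ⟨d, e⟩ hp
    rw [Finset.mem_erase, Finset.mem_erase, hs, Finset.HasAntidiagonal.mem_antidiagonal] at hp
    obtain ⟨hp2, hp1, hde⟩ := hp
    simp only [hf]
    rcases lt_trichotomy d n with hd | hd | hd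
    · rcases lt_trichotomy e n with he | he | he
      · -- both small: product of earlier variables
        rw [A_lt n hd, A_lt n he]
        have hd' : n - 1 - d < K := by omega
        have he' : n - 1 - e < K := by omega
        have hXd := IH (n - 1 - d) hd' (by omega)
        have hXe := IH (n - 1 - e) he' (by omega)
        exact Subalgebra.mul_mem T hXd hXe
      · exfalso; apply hp2; ext <;> simp <;> omega
      · rw [A_gt n he, mul_zero]; exact Subalgebra.zero_mem T
    · exfalso; apply hp1; ext <;> simp <;> omega
    · rw [A_gt n hd, zero_mul]; exact Subalgebra.zero_mem T
  have hS_mem : S n jK ∈ T := ⟨X jK, by show aeval (S n) (X jK) = S n jK; rw [aeval_X]⟩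
  have h2X : S n jK - rest = 2 * X ⟨K, hK⟩ := by rw [hsplit]; ring
  have hXeq : (X ⟨K, hK⟩ : MvPolynomial (Fin n) ℂ) = C (2⁻¹ : ℂ) * (S n jK - rest) := by
    rw [h2X]
    have h2C : (2 : MvPolynomial (Fin n) ℂ) = C (2 : ℂ) :=
      (map_ofNat (C : ℂ →+* MvPolynomial (Fin n) ℂ) 2).symm
    rw [h2C, ← mul_assoc, ← C_mul]
    norm_num
  rw [hXeq]
  exact Subalgebra.mul_mem T (Subalgebra.algebraMap_mem' T _)
    (Subalgebra.sub_mem T hS_mem hrest_mem)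

lemma aeval_S_surjective :
    Function.Surjective (aeval (S n) : MvPolynomial (Fin (2 * n)) ℂ →ₐ[ℂ] MvPolynomial (Fin n) ℂ) := by
  rw [← AlgHom.range_eq_top]
  rw [eq_top_iff, ← MvPolynomial.adjoin_range_X (R := ℂ) (σ := Fin n)]
  apply Algebra.adjoin_le
  rintro _ ⟨i, rfl⟩
  have := X_mem_range n i.val i.isLt
  simpa using this

lemma mem_ker_iff (p : MvPolynomial (Fin (2 * n)) ℂ) :
    aeval (S n) p = 0 ↔ ∀ b ∈ Set.range (σf n), eval b p = 0 := by
  constructor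
  · rintro h _ ⟨c, rfl⟩
    have : eval c (aeval (S n) p) = eval (σf n c) p := eval_aeval _ _ _
    rw [h] at this
    simpa using this.symm
  · intro h
    apply MvPolynomial.funext (q := 0)
    intro c
    rw [eval_aeval]
    rw [map_zero]; exact h (σf n c) ⟨c, rfl⟩

lemma zeroLocus_sub (x : Fin (2 * n) → ℂ)
    (hx : ∀ p : MvPolynomial (Fin (2 * n)) ℂ,
      (∀ b ∈ Set.range (σf n), eval b p = 0) → eval x p = 0) :
    x ∈ Set.range (σf n) := by
  have hsurj := aeval_S_surjective n
  choose R hR using fun k : Fin n => hsurj (X k)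
  set c : Fin n → ℂ := fun k => eval x (R k) with hc
  refine ⟨c, ?_⟩
  funext j
  have hker : aeval (S n) (X j - aeval R (S n j)) = 0 := by
    rw [map_sub, aeval_X]
    have : aeval (S n) (aeval R (S n j)) = S n j := by
      have hcomp := MvPolynomial.comp_aeval (φ := (aeval (S n) : MvPolynomial (Fin (2 * n)) ℂ →ₐ[ℂ] MvPolynomial (Fin n) ℂ)) (f := R)
      have := congrArg (fun ψ => ψ (S n j)) hcomp
      simp only [AlgHom.comp_apply] at this
      rw [this]
      simp only [hR]
      have : (fun k : Fin n => (X k : MvPolynomial (Fin n) ℂ)) = X := rfl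
      rw [this, aeval_X_left]
      simp
    rw [this, sub_self]
  have hvanish : eval x (X j - aeval R (S n j)) = 0 :=
    hx _ ((mem_ker_iff n _).mp hker)
  rw [map_sub, eval_X, sub_eq_zero] at hvanish
  rw [hvanish, eval_aeval]
  rfl

lemma sum_univ_eq_degree {N : ℕ} (s : Fin N →₀ ℕ) :
    ∑ i : Fin N, s i = s.degree := by
  rw [Finsupp.degree]
  exact (Finset.sum_subset (Finset.subset_univ _)
    (fun i _ hi => Finsupp.notMem_support_iff.mp hi)).symm

lemma mem_support_degree {N k : ℕ} {H : MvPolynomial (Fin N) ℂ} (hH : H.IsHomogeneous k)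
    {α : Fin N →₀ ℕ} (hα : α ∈ H.support) : α.degree = k := by
  by_contra h
  exact (mem_support_iff.mp hα) (hH.coeff_eq_zero h)

/-- Substituting `X i ↦ C (b i) * X` into a homogeneous polynomial of degree `k`. -/
lemma aeval_C_mul_X_homog {N k : ℕ} (b : Fin N → ℂ) {H : MvPolynomial (Fin N) ℂ}
    (hH : H.IsHomogeneous k) :
    aeval (fun i => Polynomial.C (b i) * Polynomial.X) H
      = Polynomial.C (eval b H) * Polynomial.X ^ k := by
  conv_lhs => rw [H.as_sum]
  conv_rhs => rw [H.as_sum]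
  rw [map_sum, map_sum, map_sum, Finset.sum_mul]
  apply Finset.sum_congr rfl
  intro α hα
  have hdeg : ∑ i : Fin N, α i = k := by
    rw [sum_univ_eq_degree]; exact mem_support_degree hH hα
  rw [aeval_monomial, eval_monomial,
    Finsupp.prod_fintype _ _ (fun i => pow_zero _),
    Finsupp.prod_fintype _ _ (fun i => pow_zero _)]
  simp_rw [mul_pow, ← Polynomial.C_pow]
  rw [Finset.prod_mul_distrib, ← map_prod, Finset.prod_pow_eq_pow_sum, hdeg,
    Polynomial.algebraMap_eq, map_mul]
  ring

/-- A nonzero homogeneous polynomial does not vanish identically on `{x₀ = 1}`. -/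
lemma exists_eval_cons_ne_zero {N k : ℕ} {H : MvPolynomial (Fin (N+1)) ℂ}
    (hH : H.IsHomogeneous k) (h0 : H ≠ 0) :
    ∃ a : Fin N → ℂ, eval (Fin.cons 1 a) H ≠ 0 := by
  set G := aeval (Fin.cons 1 X : Fin (N+1) → MvPolynomial (Fin N) ℂ) H with hG
  have hGa : ∀ a : Fin N → ℂ, eval a G = eval (Fin.cons 1 a) H := by
    intro a
    have hfun : (fun s => eval a ((Fin.cons 1 X : Fin (N+1) → MvPolynomial (Fin N) ℂ) s))
        = Fin.cons 1 a := by
      funext i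
      refine Fin.cases ?_ (fun j => ?_) i
      · simp
      · simp
    rw [hG, eval_aeval, hfun]
  have hGsum : G = ∑ β ∈ H.support, monomial β.tail (coeff β H) := by
    rw [hG]
    conv_lhs => rw [H.as_sum]
    rw [map_sum]
    apply Finset.sum_congr rfl
    intro β _
    rw [aeval_monomial, Finsupp.prod_fintype _ _ (fun i => pow_zero _),
      Fin.prod_univ_succ, monomial_eq, Finsupp.prod_fintype _ _ (fun i => pow_zero _)]
    simp only [Fin.cons_zero, Fin.cons_succ, one_pow, one_mul, Finsupp.tail_apply,
      MvPolynomial.algebraMap_eq]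
  have hG0 : G ≠ 0 := by
    obtain ⟨α, hα⟩ := MvPolynomial.support_nonempty.mpr h0
    have hcoeff : coeff α.tail G = coeff α H := by
      rw [hGsum, MvPolynomial.coeff_sum]
      rw [Finset.sum_eq_single α]
      · rw [coeff_monomial, if_pos rfl]
      · intro β hβ hne
        rw [coeff_monomial, if_neg]
        intro htail
        apply hne
        have h0eq : β 0 = α 0 := by
          have hβd := mem_support_degree hH hβ
          have hαd := mem_support_degree hH hα
          have h1 := sum_univ_eq_degree β
          have h2 := sum_univ_eq_degree α
          rw [Fin.sum_univ_succ] at h1 h2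
          have htailsum : ∑ j : Fin N, β.tail j = ∑ j : Fin N, α.tail j := by rw [htail]
          simp only [Finsupp.tail_apply] at htailsum
          omega
        calc β = Finsupp.cons (β 0) β.tail := (Finsupp.cons_tail β).symm
          _ = Finsupp.cons (α 0) α.tail := by rw [htail, h0eq]
          _ = α := Finsupp.cons_tail α
      · intro h; exact absurd hα h
    intro h
    rw [h, coeff_zero] at hcoeff
    exact (mem_support_iff.mp hα) hcoeff.symm
  by_contra hall
  push_neg at hall
  apply hG0
  apply MvPolynomial.funext (q := 0)
  intro a
  rw [hGa, map_zero]
  exact hall a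

/-- the shear `X₀ ↦ X₀`, `X_{j+1} ↦ X_{j+1} + aⱼ X₀`. -/
noncomputable def shear (N : ℕ) (a : Fin N → ℂ) :
    MvPolynomial (Fin (N+1)) ℂ →ₐ[ℂ] MvPolynomial (Fin (N+1)) ℂ :=
  aeval (Fin.cases (X 0) (fun j => X j.succ + C (a j) * X 0))

lemma shear_comp (N : ℕ) (a : Fin N → ℂ) :
    (shear N a).comp (shear N (-a)) = AlgHom.id ℂ _ := by
  apply MvPolynomial.algHom_ext
  intro i
  refine Fin.cases ?_ (fun j => ?_) i
  · simp [shear]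
  · simp only [shear, AlgHom.comp_apply, aeval_X, Fin.cases_succ, AlgHom.id_apply,
      map_add, map_mul, aeval_C, Fin.cases_zero, Pi.neg_apply, map_neg]
    rw [MvPolynomial.algebraMap_eq]
    ring

noncomputable def shearEquiv (N : ℕ) (a : Fin N → ℂ) :
    MvPolynomial (Fin (N+1)) ℂ ≃ₐ[ℂ] MvPolynomial (Fin (N+1)) ℂ :=
  AlgEquiv.ofAlgHom (shear N a) (shear N (-a)) (shear_comp N a)
    (by have := shear_comp N (-a); rwa [neg_neg] at this)

lemma shear_isHomogeneous {N k : ℕ} {H : MvPolynomial (Fin (N+1)) ℂ} (a : Fin N → ℂ)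
    (hH : H.IsHomogeneous k) : (shear N a H).IsHomogeneous k := by
  have h1 : ∀ i : Fin (N+1),
      ((Fin.cases (X 0) (fun j => X j.succ + C (a j) * X 0) :
        Fin (N+1) → MvPolynomial (Fin (N+1)) ℂ) i).IsHomogeneous 1 := by
    intro i
    refine Fin.cases ?_ (fun j => ?_) i
    · simpa using isHomogeneous_X ℂ (0 : Fin (N+1))
    · simp only [Fin.cases_succ]
      exact (isHomogeneous_X ℂ _).add (isHomogeneous_C_mul_X _ _)
  have h2 := hH.aeval _ h1
  rw [one_mul] at h2
  exact h2

/-- Main normalization: after a shear, `f` becomes (up to a unit) monic in `x₀`. -/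
lemma exists_shear_good {N : ℕ} (f : MvPolynomial (Fin (N+1)) ℂ) (hf : f ≠ 0) :
    ∃ a : Fin N → ℂ,
      IsUnit (MvPolynomial.finSuccEquiv ℂ N (shear N a f)).leadingCoeff := by
  classical
  set d := f.totalDegree with hd
  set H := homogeneousComponent d f with hH_def
  have hH : H.IsHomogeneous d := homogeneousComponent_isHomogeneous d f
  have hH0 : H ≠ 0 := by
    obtain ⟨α, hα, hsup⟩ := Finset.exists_mem_eq_sup f.support
      (MvPolynomial.support_nonempty.mpr hf) (fun s => s.sum fun _ e => e)
    have hαd : α.degree = d := by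
      rw [hd, MvPolynomial.totalDegree, hsup]; rfl
    intro h
    have := congrArg (coeff α) h
    rw [coeff_homogeneousComponent, if_pos hαd, coeff_zero] at this
    exact (mem_support_iff.mp hα) this
  obtain ⟨a, ha⟩ := exists_eval_cons_ne_zero hH hH0
  refine ⟨a, ?_⟩
  set b : Fin (N+1) → ℂ := Fin.cons 1 a with hb
  set F := shear N a f with hF
  set g' := MvPolynomial.finSuccEquiv ℂ N F with hg'
  -- (c1) total degree bound
  have hFdeg : F.totalDegree ≤ d := by
    conv_lhs => rw [hF, ← sum_homogeneousComponent f, map_sum]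
    refine le_trans (MvPolynomial.totalDegree_finset_sum _ _) ?_
    apply Finset.sup_le
    intro i hi
    rw [Finset.mem_range] at hi
    have hhom := shear_isHomogeneous a (homogeneousComponent_isHomogeneous i f)
    exact le_trans hhom.totalDegree_le (by omega)
  -- (c2a) the evaluation of the candidate leading coefficient
  set ev0 : MvPolynomial (Fin N) ℂ →ₐ[ℂ] ℂ := aeval (fun _ => (0:ℂ)) with hev0
  have hχcoeff : (aeval (fun i => Polynomial.C (b i) * Polynomial.X) f).coeff d
      = eval b H := by
    conv_lhs => rw [← sum_homogeneousComponent f, map_sum]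
    rw [Polynomial.finset_sum_coeff]
    rw [Finset.sum_eq_single d]
    · rw [aeval_C_mul_X_homog b (homogeneousComponent_isHomogeneous d f)]
      rw [Polynomial.coeff_C_mul, Polynomial.coeff_X_pow, if_pos rfl, mul_one, ← hH_def]
    · intro i _ hne
      rw [aeval_C_mul_X_homog b (homogeneousComponent_isHomogeneous i f),
        Polynomial.coeff_C_mul, Polynomial.coeff_X_pow, if_neg (fun h => hne h.symm), mul_zero]
    · intro h
      exact absurd (Finset.mem_range.mpr (by omega)) h
  have hcomm : (Polynomial.mapAlgHom ev0).comp
      ((MvPolynomial.finSuccEquiv ℂ N).toAlgHom.comp (shear N a))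
      = aeval (fun i => Polynomial.C (b i) * Polynomial.X) := by
    apply MvPolynomial.algHom_ext
    intro i
    have hCeq : ∀ x : ℂ, ((MvPolynomial.finSuccEquiv ℂ N) (C x) : Polynomial (MvPolynomial (Fin N) ℂ))
        = Polynomial.C (C x) := by
      intro x
      have h := congrArg (fun ψ : ℂ →+* MvPolynomial (Fin (N+1)) ℂ => ψ x)
        (MvPolynomial.finSuccEquiv_comp_C_eq_C N (R := ℂ))
      simp only [RingHom.coe_comp, Function.comp_apply, RingHom.coe_coe] at h
      rw [← h, AlgEquiv.apply_symm_apply]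
    refine Fin.cases ?_ (fun j => ?_) i
    · simp only [shear, AlgHom.comp_apply, aeval_X, Fin.cases_zero, AlgEquiv.coe_toAlgHom,
        AlgHom.coe_coe, MvPolynomial.finSuccEquiv_X_zero, Polynomial.coe_mapAlgHom,
        Polynomial.map_X]
      rw [hb]
      simp
    · simp only [shear, AlgHom.comp_apply, aeval_X, Fin.cases_succ, AlgEquiv.coe_toAlgHom,
        AlgHom.coe_coe, map_add, map_mul, MvPolynomial.finSuccEquiv_X_succ,
        MvPolynomial.finSuccEquiv_X_zero, Polynomial.coe_mapAlgHom, hCeq]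
      simp only [Polynomial.map_add, Polynomial.map_mul, Polynomial.map_C, Polynomial.map_X]
      simp [hb, hev0]
  have hmap : Polynomial.map (ev0 : MvPolynomial (Fin N) ℂ →ₐ[ℂ] ℂ).toRingHom g'
      = aeval (fun i => Polynomial.C (b i) * Polynomial.X) f := by
    have h := congrArg (fun ψ : MvPolynomial (Fin (N+1)) ℂ →ₐ[ℂ] Polynomial ℂ => ψ f) hcomm
    simpa [Polynomial.coe_mapAlgHom] using h
  have hcoeffd : ev0 (g'.coeff d) = eval b H := by
    have h := congrArg (fun p : Polynomial ℂ => p.coeff d) hmap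
    simp only [Polynomial.coeff_map] at h
    rw [← hχcoeff, ← h]
    rfl
  have hk : ev0 (g'.coeff d) ≠ 0 := by rw [hcoeffd]; exact ha
  have hne : g'.coeff d ≠ 0 := fun h => hk (by rw [h, map_zero])
  have hled : g'.natDegree ≤ d := by
    rw [hg', MvPolynomial.natDegree_finSuccEquiv]
    exact le_trans (degreeOf_le_totalDegree F 0) hFdeg
  have hdeg' : g'.natDegree = d := le_antisymm hled (Polynomial.le_natDegree_of_ne_zero hne)
  have hconst : g'.coeff d = C (ev0 (g'.coeff d)) := by
    apply MvPolynomial.ext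
    intro β
    rw [MvPolynomial.coeff_C]
    by_cases hβ : 0 = β
    · rw [if_pos hβ, ← hβ, hev0,
        show (fun _ : Fin N => (0:ℂ)) = 0 from rfl, MvPolynomial.aeval_zero]
      simp [constantCoeff_eq]
    · rw [if_neg hβ]
      have h1 : coeff β (g'.coeff d) = coeff (Finsupp.cons d β) F := by
        rw [hg']
        exact finSuccEquiv_coeff_coeff β F d
      rw [h1]
      apply coeff_eq_zero_of_totalDegree_lt
      have h2 : ∑ i ∈ (Finsupp.cons d β).support, (Finsupp.cons d β) i
          = d + ∑ j : Fin N, β j := by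
        rw [show (∑ i ∈ (Finsupp.cons d β).support, (Finsupp.cons d β) i)
            = (Finsupp.cons d β).degree from rfl, ← sum_univ_eq_degree, Fin.sum_univ_succ]
        simp [Finsupp.cons_succ]
      have hpos : 0 < ∑ j : Fin N, β j := by
        rcases Nat.eq_zero_or_pos (∑ j : Fin N, β j) with h | h
        · exfalso
          apply hβ
          ext j
          have := (Finset.sum_eq_zero_iff_of_nonneg (fun j _ => Nat.zero_le _)).mp h j
            (Finset.mem_univ j)
          simp [this]
        · exact h
      omega
  show IsUnit g'.leadingCoeff
  rw [Polynomial.leadingCoeff, hdeg', hconst]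
  exact (isUnit_iff_ne_zero.mpr hk).map (C : ℂ →+* MvPolynomial (Fin N) ℂ)


lemma shearEquiv_apply (N : ℕ) (a : Fin N → ℂ) (f : MvPolynomial (Fin (N+1)) ℂ) :
    shearEquiv N a f = shear N a f := rfl

/-- kill the first `i` variables -/
noncomputable def κ (i : ℕ) : MvPolynomial (Fin n) ℂ →ₐ[ℂ] MvPolynomial (Fin n) ℂ :=
  aeval (fun j : Fin n => if i ≤ (j : ℕ) then X j else 0)

lemma κ_comp (i : ℕ) : (κ n (i+1)).comp (κ n i) = κ n (i + 1) := by
  apply MvPolynomial.algHom_ext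
  intro j
  simp only [κ, AlgHom.comp_apply, aeval_X]
  by_cases h : i ≤ (j : ℕ)
  · rw [if_pos h, aeval_X]
  · rw [if_neg h, map_zero, if_neg (by omega)]

lemma ker_κ_mono (i : ℕ) :
    RingHom.ker (κ n i).toRingHom ≤ RingHom.ker (κ n (i+1)).toRingHom := by
  intro p hp
  rw [RingHom.mem_ker] at hp ⊢
  show κ n (i+1) p = 0
  have := congrArg (fun ψ : MvPolynomial (Fin n) ℂ →ₐ[ℂ] MvPolynomial (Fin n) ℂ => ψ p) (κ_comp n i)
  simp only [AlgHom.comp_apply] at this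
  rw [← this]
  rw [show (κ n i).toRingHom p = κ n i p from rfl] at hp
  rw [hp, map_zero]

lemma ker_κ_strict (i : ℕ) (hi : i < n) :
    RingHom.ker (κ n i).toRingHom < RingHom.ker (κ n (i+1)).toRingHom := by
  apply lt_of_le_of_ne (ker_κ_mono n i)
  intro h
  have h1 : (X ⟨i, hi⟩ : MvPolynomial (Fin n) ℂ) ∈ RingHom.ker (κ n (i+1)).toRingHom := by
    rw [RingHom.mem_ker]
    show κ n (i+1) (X ⟨i, hi⟩) = 0
    rw [κ, aeval_X, if_neg (by simp)]
  rw [← h, RingHom.mem_ker] at h1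
  have h2 : κ n i (X ⟨i, hi⟩) = X ⟨i, hi⟩ := by
    rw [κ, aeval_X, if_pos (by simp)]
  rw [show (κ n i).toRingHom (X ⟨i,hi⟩) = κ n i (X ⟨i,hi⟩) from rfl, h2] at h1
  exact MvPolynomial.X_ne_zero _ h1

noncomputable def primeChain : LTSeries (PrimeSpectrum (MvPolynomial (Fin n) ℂ)) where
  length := n
  toFun := fun i => ⟨RingHom.ker (κ n (i : ℕ)).toRingHom, RingHom.ker_isPrime _⟩
  step := fun i => by
    have := ker_κ_strict n (i : ℕ) i.isLt
    exact this

lemma lower_bound : (n : WithBot (WithTop ℕ)) ≤ ringKrullDim (MvPolynomial (Fin n) ℂ) := by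
  have := LTSeries.length_le_krullDim (primeChain n)
  exact this

/-- going modulo a nonzero element after shearing: strict chains of primes descend with
length reduced by one. -/
theorem upper_bound : ∀ n : ℕ, ringKrullDim (MvPolynomial (Fin n) ℂ) ≤ (n : WithBot (WithTop ℕ)) := by
  intro n
  induction n with
  | zero =>
    rw [ringKrullDim_eq_of_ringEquiv (MvPolynomial.isEmptyRingEquiv ℂ (Fin 0)),
      ringKrullDim_eq_zero_of_field]
    norm_num
    exact le_rfl
  | succ n IH =>
    have key : ∀ p : LTSeries (PrimeSpectrum (MvPolynomial (Fin (n+1)) ℂ)), p.length ≤ n + 1 := by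
      intro p
      rcases Nat.eq_zero_or_pos p.length with h0 | hpos
      · omega
      obtain ⟨L', hL⟩ : ∃ L', p.length = L' + 1 := ⟨p.length - 1, by omega⟩
      set A := MvPolynomial (Fin (n+1)) ℂ with hA
      set B := MvPolynomial (Fin n) ℂ with hB
      -- extract f in p 1 but not p 0
      have hstep0 : (p.toFun ((⟨0, hpos⟩ : Fin p.length).castSucc)).asIdeal
          < (p.toFun ((⟨0, hpos⟩ : Fin p.length).succ)).asIdeal := p.step ⟨0, hpos⟩
      obtain ⟨f, hf1, hf0⟩ := SetLike.exists_of_lt hstep0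
      have hfne : f ≠ 0 := by
        intro h
        exact hf0 (h ▸ (Ideal.zero_mem _))
      obtain ⟨a, hunit⟩ := exists_shear_good f hfne
      set g' := MvPolynomial.finSuccEquiv ℂ n (shear n a f) with hg'
      set u := hunit.unit with hu
      set g'' := Polynomial.C ((u⁻¹ : (MvPolynomial (Fin n) ℂ)ˣ) : MvPolynomial (Fin n) ℂ) * g' with hg''
      have hmonic : g''.Monic := by
        rw [Polynomial.Monic, hg'', Polynomial.leadingCoeff_mul, Polynomial.leadingCoeff_C]
        exact Units.inv_mul _
      have hspan : Ideal.span {g''} = Ideal.span {g'} := by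
        rw [Ideal.span_singleton_eq_span_singleton]
        refine ⟨Units.map (Polynomial.C : MvPolynomial (Fin n) ℂ →+* _).toMonoidHom u, ?_⟩
        show g'' * Polynomial.C (u : MvPolynomial (Fin n) ℂ) = g'
        rw [hg'', mul_comm, ← mul_assoc, ← Polynomial.C_mul, Units.mul_inv, Polynomial.C_1,
          one_mul]
      -- the ring equivalence A ≃ Polynomial B
      set e1 : A ≃+* Polynomial (MvPolynomial (Fin n) ℂ) :=
        (shearEquiv n a).toRingEquiv.trans (MvPolynomial.finSuccEquiv ℂ n).toRingEquiv with he1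
      have he1f : e1 f = g' := by
        show (MvPolynomial.finSuccEquiv ℂ n) ((shearEquiv n a) f) = g'
        rw [shearEquiv_apply, hg']
      have hmapspan : Ideal.span {g''} = Ideal.map (e1 : A →+* Polynomial (MvPolynomial (Fin n) ℂ))
          (Ideal.span {f}) := by
        rw [Ideal.map_span, Set.image_singleton,
          show (e1 : A →+* Polynomial (MvPolynomial (Fin n) ℂ)) f = g' from he1f]
        exact hspan
      set E : (A ⧸ Ideal.span {f}) ≃+* AdjoinRoot g'' :=
        Ideal.quotientEquiv (Ideal.span {f}) (Ideal.span {g''}) e1 hmapspan with hE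
      -- integrality
      have hint : Algebra.IsIntegral (MvPolynomial (Fin n) ℂ) (AdjoinRoot g'') := by
        have pb := AdjoinRoot.powerBasis' hmonic
        have : Module.Finite (MvPolynomial (Fin n) ℂ) (AdjoinRoot g'') :=
          Module.Finite.of_basis pb.basis
        exact Algebra.IsIntegral.of_finite _ _
      -- the chain of primes containing f
      let mk : A →+* A ⧸ Ideal.span {f} := Ideal.Quotient.mk (Ideal.span {f})
      set P : Fin (L' + 1) → Ideal A := fun i => (p.toFun ⟨(i : ℕ) + 1, by omega⟩).asIdeal with hP
      have hPprime : ∀ i, (P i).IsPrime := fun i => (p.toFun _).isPrime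
      have hfP : ∀ i, Ideal.span {f} ≤ P i := by
        intro i
        rw [Ideal.span_le, Set.singleton_subset_iff]
        have hmono := p.monotone (show ((⟨0, hpos⟩ : Fin p.length).succ : Fin (p.length + 1))
            ≤ ⟨(i : ℕ) + 1, by omega⟩ from by
          rw [Fin.le_def]
          simp)
        exact hmono hf1
      have hPmono : ∀ {i j : Fin (L' + 1)}, i < j → P i < P j := by
        intro i j hij
        have := p.strictMono (show (⟨(i : ℕ) + 1, by omega⟩ : Fin (p.length + 1))
            < ⟨(j : ℕ) + 1, by omega⟩ from by
          rw [Fin.lt_def]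
          simp only
          omega)
        exact this
      -- push down to B
      set r : Fin (L' + 1) → Ideal (MvPolynomial (Fin n) ℂ) := fun i =>
        Ideal.comap (algebraMap (MvPolynomial (Fin n) ℂ) (AdjoinRoot g''))
          (Ideal.comap (E.symm : AdjoinRoot g'' →+* A ⧸ Ideal.span {f})
            (Ideal.map mk (P i))) with hr
      have hmapprime : ∀ i, (Ideal.map mk (P i)).IsPrime := by
        intro i
        haveI := hPprime i
        apply Ideal.map_isPrime_of_surjective Ideal.Quotient.mk_surjective
        show RingHom.ker (Ideal.Quotient.mk (Ideal.span {f})) ≤ P i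
        rw [Ideal.mk_ker]
        exact hfP i
      have hrprime : ∀ i, (r i).IsPrime := by
        intro i
        haveI := hmapprime i
        infer_instance
      have hcomapmap : ∀ i, Ideal.comap mk (Ideal.map mk (P i)) = P i := by
        intro i
        rw [Ideal.comap_map_of_surjective mk Ideal.Quotient.mk_surjective]
        apply sup_eq_left.mpr
        rw [← RingHom.ker_eq_comap_bot]
        show RingHom.ker (Ideal.Quotient.mk (Ideal.span {f})) ≤ P i
        rw [Ideal.mk_ker]
        exact hfP i
      have hrmono : ∀ i j : Fin (L' + 1), i < j → r i < r j := by
        intro i j hij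
        have h1 : Ideal.map mk (P i) < Ideal.map mk (P j) := by
          apply lt_of_le_of_ne (Ideal.map_mono (hPmono hij).le)
          intro h
          have := congrArg (Ideal.comap mk) h
          rw [hcomapmap i, hcomapmap j] at this
          exact (hPmono hij).ne this
        have h2 : Ideal.comap (E.symm : AdjoinRoot g'' →+* A ⧸ Ideal.span {f})
            (Ideal.map mk (P i)) < Ideal.comap (E.symm : AdjoinRoot g'' →+* A ⧸ Ideal.span {f})
            (Ideal.map mk (P j)) := by
          apply lt_of_le_of_ne (Ideal.comap_mono h1.le)
          intro h
          exact h1.ne (Ideal.comap_injective_of_surjective _ E.symm.surjective h)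
        haveI : (Ideal.comap (E.symm : AdjoinRoot g'' →+* A ⧸ Ideal.span {f})
            (Ideal.map mk (P i))).IsPrime := by
          haveI := hmapprime i
          infer_instance
        obtain ⟨x, hxj, hxi⟩ := SetLike.exists_of_lt h2
        exact Ideal.comap_lt_comap_of_integral_mem_sdiff h2.le ⟨hxj, hxi⟩
          (Algebra.IsIntegral.isIntegral x)
      -- the new chain
      set q : LTSeries (PrimeSpectrum (MvPolynomial (Fin n) ℂ)) :=
        { length := L'
          toFun := fun i => ⟨r i, hrprime i⟩
          step := fun i => hrmono i.castSucc i.succ (Fin.castSucc_lt_succ (i := i)) } with hq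
      have hql := LTSeries.length_le_krullDim q
      have : (L' : WithBot (WithTop ℕ)) ≤ (n : WithBot (WithTop ℕ)) :=
        le_trans hql IH
      have hLn : L' ≤ n := by exact_mod_cast this
      omega
    rw [ringKrullDim, Order.krullDim_eq_iSup_length]
    rw [show ((n + 1 : ℕ) : WithBot (WithTop ℕ)) = ((((n+1) : ℕ) : ℕ∞) : WithBot ℕ∞) from rfl]
    rw [WithBot.coe_le_coe]
    apply iSup_le
    intro p
    exact_mod_cast key p


theorem dim_eq (n : ℕ) :
    ringKrullDim (MvPolynomial (Fin n) ℂ) = (n : WithBot (WithTop ℕ)) :=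
  le_antisymm (upper_bound n) (lower_bound n)

end SqLocus

/-- The ideal of all polynomials vanishing on a subset `W ⊆ ℂ^m`. -/
noncomputable def vanishingIdeal {m : ℕ} (W : Set (Fin m → ℂ)) :
    Ideal (MvPolynomial (Fin m) ℂ) where
  carrier := {p | ∀ x ∈ W, MvPolynomial.eval x p = 0}
  add_mem' := by
    intro a b ha hb x hx
    simp [ha x hx, hb x hx]
  zero_mem' := by
    intro x hx
    simp
  smul_mem' := by
    intro c p hp x hx
    simp [smul_eq_mul, hp x hx]

open SqLocus in
/-- Let `m ≥ 2` be even.  The set `W ⊆ ℂ^m` of tuples `(b₁, …, b_m)` such that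
`x^m + b₁ x^(m−1) + ⋯ + b_m` is the square of a polynomial is Zariski closed, and the
Krull dimension of `ℂ[b₁, …, b_m]/I(W)` equals `m/2`.
(Here `b : Fin m → ℂ` encodes the tuple via `b i = b_{i+1}`.) -/
theorem square_locus_closed_and_dim_eq (m : ℕ) (hm : 2 ≤ m) (heven : Even m)
    (W : Set (Fin m → ℂ))
    (hW : W = {b : Fin m → ℂ | ∃ q : Polynomial ℂ,
      (Polynomial.X : Polynomial ℂ) ^ m +
        ∑ i : Fin m, Polynomial.C (b i) *
          (Polynomial.X : Polynomial ℂ) ^ (m - ((i : ℕ) + 1)) = q ^ 2}) :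
    (∃ I : Ideal (MvPolynomial (Fin m) ℂ),
      W = {x : Fin m → ℂ | ∀ p ∈ I, MvPolynomial.eval x p = 0}) ∧
    ringKrullDim (MvPolynomial (Fin m) ℂ ⧸ vanishingIdeal W) =
      ((m / 2 : ℕ) : WithBot (WithTop ℕ)) := by
  obtain ⟨r, hr⟩ := heven
  have hmr : m = 2 * r := by omega
  subst hmr
  have hn : 1 ≤ r := by omega
  have hWr : W = Set.range (σf r) := by
    rw [hW, ← W_eq_range r hn]
    rfl
  have hmem : ∀ p : MvPolynomial (Fin (2 * r)) ℂ,
      p ∈ vanishingIdeal W ↔ ∀ b ∈ W, MvPolynomial.eval b p = 0 := fun p => Iff.rfl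
  constructor
  · refine ⟨vanishingIdeal W, ?_⟩
    apply Set.Subset.antisymm
    · intro x hx p hp
      exact (hmem p).mp hp x hx
    · intro x hx
      rw [hWr]
      apply zeroLocus_sub r x
      intro p hp
      apply hx p
      rw [hmem]
      intro y hy
      rw [hWr] at hy
      exact hp y hy
  · have hker : vanishingIdeal W = RingHom.ker
        ((MvPolynomial.aeval (S r)).toRingHom : MvPolynomial (Fin (2 * r)) ℂ →+* MvPolynomial (Fin r) ℂ) := by
      ext p
      rw [RingHom.mem_ker, hmem]
      rw [show ((MvPolynomial.aeval (S r)).toRingHom : MvPolynomial (Fin (2 * r)) ℂ →+* MvPolynomial (Fin r) ℂ) p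
          = MvPolynomial.aeval (S r) p from rfl]
      rw [mem_ker_iff r p, hWr]
    rw [hker]
    have hsurj : Function.Surjective
        ((MvPolynomial.aeval (S r)).toRingHom : MvPolynomial (Fin (2 * r)) ℂ →+* MvPolynomial (Fin r) ℂ) :=
      aeval_S_surjective r
    rw [ringKrullDim_eq_of_ringEquiv (RingHom.quotientKerEquivOfSurjective hsurj), dim_eq r]
    congr 1
    omega
end

section
/- Let f ∈ ℂ[z] be a polynomial of degree d ≥ 1 and let S ⊆ ℂ be a set containing all critical values of f. Then the restriction of the map z ↦ f(z) to a map from {z ∈ ℂ : f(z) ∉ S} to ℂ ∖ S is a covering map. -/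
open Polynomial

open Metric Set Filter Topology

set_option maxHeartbeats 1000000 in
theorem aux_evenly_covered (S : Set ℂ) (q : ℂ → ℂ) (hq : Continuous q)
    (w : ℂ) (hw : w ∉ S)
    (F : Finset ℂ) (memF : ∀ z : ℂ, z ∈ F ↔ q z = w)
    (Φ : ℂ → OpenPartialHomeomorph ℂ ℂ)
    (V : ℂ → Set ℂ) (hVopen : ∀ z₀ : ℂ, IsOpen (V z₀))
    (hVsub : ∀ z₀ : ℂ, V z₀ ⊆ (Φ z₀).source)
    (hΦcoe : ∀ z₀ ∈ F, ∀ z : ℂ, Φ z₀ z = q z)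
    (hVmem : ∀ z₀ ∈ F, z₀ ∈ V z₀)
    (W : Set ℂ) (hWopen : IsOpen W) (hwW : w ∈ W)
    (hWim : ∀ z₀ ∈ F, W ⊆ (Φ z₀) '' (V z₀))
    (ρ : ℂ → ℂ)
    (hρ : ∀ z : ℂ, q z ∈ W → (ρ z ∈ F ∧ z ∈ V (ρ z) ∧ ∀ y ∈ F, z ∈ V y → y = ρ z))
    (zd : ℂ) (hzd : q zd = w) :
    IsEvenlyCovered (fun z : {z : ℂ // q z ∉ S} => (⟨q z.1, z.2⟩ : {w : ℂ // w ∉ S}))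
      ⟨w, hw⟩
      ↥((fun z : {z : ℂ // q z ∉ S} => (⟨q z.1, z.2⟩ : {w : ℂ // w ∉ S})) ⁻¹'
        {(⟨w, hw⟩ : {w : ℂ // w ∉ S})}) := by
  classical
  set G : {z : ℂ // q z ∉ S} → {w : ℂ // w ∉ S} := fun z => ⟨q z.1, z.2⟩ with hG
  have hmemE : ∀ z₀ ∈ F, q z₀ ∉ S := fun z₀ h => by
    rw [(memF z₀).mp h]; exact hw
  -- injectivity on the sheets
  have hVinj : ∀ z₀ ∈ F, Set.InjOn q (V z₀) := by
    intro z₀ h a ha b hb hab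
    apply (Φ z₀).injOn (hVsub z₀ ha) (hVsub z₀ hb)
    rw [hΦcoe z₀ h a, hΦcoe z₀ h b]
    exact hab
  have hVroot : ∀ z₀ ∈ F, ∀ z ∈ V z₀, q z = w → z = z₀ := by
    intro z₀ h z hz hzw
    exact hVinj z₀ h hz (hVmem z₀ h) (by rw [(memF z₀).mp h, hzw])
  -- local inverse properties on `W`
  have hsymm : ∀ z₀ ∈ F, ∀ u ∈ W, ((Φ z₀).symm u ∈ V z₀ ∧ q ((Φ z₀).symm u) = u) := by
    intro z₀ h u hu
    obtain ⟨v, hv, hvu⟩ := hWim z₀ h hu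
    have hveq : (Φ z₀).symm u = v := by
      rw [← hvu]
      exact (Φ z₀).left_inv (hVsub z₀ hv)
    exact ⟨hveq ▸ hv, by rw [hveq, ← hΦcoe z₀ h v]; exact hvu⟩
  have hzdF : zd ∈ F := (memF zd).mpr hzd
  have i₀ : ↥(G ⁻¹' {(⟨w, hw⟩ : {w : ℂ // w ∉ S})}) :=
    ⟨⟨zd, hmemE zd hzdF⟩, by
      simp only [Set.mem_preimage, Set.mem_singleton_iff]
      exact Subtype.ext hzd⟩
  have hfib : ∀ i : ↥(G ⁻¹' {(⟨w, hw⟩ : {w : ℂ // w ∉ S})}), q i.1.1 = w := by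
    intro i
    have := i.2
    simp only [Set.mem_preimage, Set.mem_singleton_iff] at this
    exact congrArg Subtype.val this
  have hdisc : DiscreteTopology ↥(G ⁻¹' {(⟨w, hw⟩ : {w : ℂ // w ∉ S})}) := by
    rw [discreteTopology_iff_isOpen_singleton]
    intro i
    have hiF : i.1.1 ∈ F := (memF _).mpr (hfib i)
    have hset : {i} = (fun j : ↥(G ⁻¹' {(⟨w, hw⟩ : {w : ℂ // w ∉ S})}) => (j.1.1 : ℂ)) ⁻¹'
        (V i.1.1) := by
      ext j
      simp only [Set.mem_singleton_iff, Set.mem_preimage]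
      constructor
      · rintro rfl
        exact hVmem _ hiF
      · intro hj
        exact Subtype.ext (Subtype.ext (hVroot i.1.1 hiF j.1.1 hj (hfib j)))
    rw [hset]
    exact (hVopen _).preimage (continuous_subtype_val.comp continuous_subtype_val)
  haveI := hdisc
  have hGcont : Continuous G := by
    apply Continuous.subtype_mk
    exact hq.comp continuous_subtype_val
  refine IsEvenlyCovered.of_trivialization (t := {
      toFun := fun z => (G z, if h : q z.1 ∈ W then
        ⟨⟨ρ z.1, hmemE _ (hρ z.1 h).1⟩, by
          simp only [Set.mem_preimage, Set.mem_singleton_iff]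
          exact Subtype.ext ((memF _).mp (hρ z.1 h).1)⟩ else i₀),
      invFun := fun p => if h : q ((Φ p.2.1.1).symm p.1.1) ∉ S then
        ⟨(Φ p.2.1.1).symm p.1.1, h⟩ else p.2.1,
      source := Subtype.val ⁻¹' (q ⁻¹' W),
      target := (Subtype.val ⁻¹' W) ×ˢ (univ : Set _),
      map_source' := ?_,
      map_target' := ?_,
      left_inv' := ?_,
      right_inv' := ?_,
      open_source := ?_,
      open_target := ?_,
      continuousOn_toFun := ?_,
      continuousOn_invFun := ?_,
      baseSet := Subtype.val ⁻¹' W,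
      open_baseSet := hWopen.preimage continuous_subtype_val,
      source_eq := rfl,
      target_eq := rfl,
      proj_toFun := fun p _ => rfl }) hwW
  -- map_source'
  · intro z hz
    exact ⟨hz, trivial⟩
  -- map_target'
  · intro p hp
    have hp1 : (p.1 : {w : ℂ // w ∉ S}).1 ∈ W := hp.1
    have hpF : p.2.1.1 ∈ F := (memF _).mpr (hfib p.2)
    have hsy := hsymm _ hpF _ hp1
    have hcond : ¬q ((Φ p.2.1.1).symm p.1.1) ∈ S := by
      rw [hsy.2]; exact p.1.2
    show (if h : _ then _ else _) ∈ _
    rw [dif_pos hcond]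
    show q ((Φ p.2.1.1).symm p.1.1) ∈ W
    rw [hsy.2]; exact hp1
  -- left_inv'
  · intro z hz
    have hz' : q z.1 ∈ W := hz
    have h1 := hρ z.1 hz
    have hΦz : Φ (ρ z.1) z.1 = q z.1 := hΦcoe _ h1.1 z.1
    have hsy : (Φ (ρ z.1)).symm (q z.1) = z.1 := by
      rw [← hΦz]; exact (Φ _).left_inv (hVsub _ h1.2.1)
    simp only [dif_pos hz']
    have hcond : ¬q ((Φ (ρ z.1)).symm (q z.1)) ∈ S := by
      rw [hsy]; exact z.2
    rw [dif_pos hcond]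
    exact Subtype.ext hsy
  -- right_inv'
  · intro p hp
    have hp1 : (p.1 : {w : ℂ // w ∉ S}).1 ∈ W := hp.1
    have hpF : p.2.1.1 ∈ F := (memF _).mpr (hfib p.2)
    have hsy := hsymm _ hpF _ hp1
    have hcond : ¬q ((Φ p.2.1.1).symm p.1.1) ∈ S := by
      rw [hsy.2]; exact p.1.2
    beta_reduce
    rw [dif_pos hcond]
    have hWv : q ((Φ p.2.1.1).symm p.1.1) ∈ W := by rw [hsy.2]; exact hp1
    rw [dif_pos hWv]
    refine Prod.ext ?_ ?_
    · exact Subtype.ext hsy.2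
    · have hρv : p.2.1.1 = ρ ((Φ p.2.1.1).symm p.1.1) :=
        (hρ _ hWv).2.2 _ hpF hsy.1
      exact Subtype.ext (Subtype.ext hρv.symm)
  rotate_left 2
  -- open_source
  · exact (hWopen.preimage hq).preimage continuous_subtype_val
  -- open_target
  · exact (hWopen.preimage continuous_subtype_val).prod isOpen_univ
  -- continuousOn_toFun
  · refine fun z hz => ContinuousAt.continuousWithinAt ?_
    have h1 := hρ z.1 hz
    have hN : IsOpen {z' : {z : ℂ // q z ∉ S} | q z'.1 ∈ W ∧ z'.1 ∈ V (ρ z.1)} := by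
      apply IsOpen.inter
      · exact (hWopen.preimage hq).preimage continuous_subtype_val
      · exact (hVopen _).preimage continuous_subtype_val
    have hzN : z ∈ {z' : {z : ℂ // q z ∉ S} | q z'.1 ∈ W ∧ z'.1 ∈ V (ρ z.1)} := ⟨hz, h1.2.1⟩
    have hev : (fun z' : {z : ℂ // q z ∉ S} => ((G z', if h : q z'.1 ∈ W then
          (⟨⟨ρ z'.1, hmemE _ (hρ z'.1 h).1⟩, by
            simp only [Set.mem_preimage, Set.mem_singleton_iff]
            exact Subtype.ext ((memF _).mp (hρ z'.1 h).1)⟩ :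
              ↥(G ⁻¹' {(⟨w, hw⟩ : {w : ℂ // w ∉ S})})) else i₀))) =ᶠ[nhds z]
        (fun z' : {z : ℂ // q z ∉ S} => (G z', (⟨⟨ρ z.1, hmemE _ h1.1⟩, by
          simp only [Set.mem_preimage, Set.mem_singleton_iff]
          exact Subtype.ext ((memF _).mp h1.1)⟩ :
            ↥(G ⁻¹' {(⟨w, hw⟩ : {w : ℂ // w ∉ S})})))) := by
      filter_upwards [hN.mem_nhds hzN] with z' hz'
      have hρeq : ρ z.1 = ρ z'.1 := (hρ z'.1 hz'.1).2.2 _ h1.1 hz'.2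
      rw [dif_pos hz'.1]
      exact Prod.ext rfl (Subtype.ext (Subtype.ext hρeq.symm))
    refine ContinuousAt.congr ?_ hev.symm
    exact (hGcont.continuousAt).prodMk continuousAt_const
  -- continuousOn_invFun
  · refine fun p hp => ContinuousAt.continuousWithinAt ?_
    have hp1 : (p.1 : {w : ℂ // w ∉ S}).1 ∈ W := hp.1
    have hpF : p.2.1.1 ∈ F := (memF _).mpr (hfib p.2)
    rw [Topology.IsEmbedding.subtypeVal.isInducing.continuousAt_iff]
    have hN : IsOpen (((Subtype.val : {w : ℂ // w ∉ S} → ℂ) ⁻¹' W) ×ˢ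
        ({p.2} : Set ↥(G ⁻¹' {(⟨w, hw⟩ : {w : ℂ // w ∉ S})}))) :=
      (hWopen.preimage continuous_subtype_val).prod (isOpen_discrete _)
    have hpN : p ∈ ((Subtype.val : {w : ℂ // w ∉ S} → ℂ) ⁻¹' W) ×ˢ
        ({p.2} : Set ↥(G ⁻¹' {(⟨w, hw⟩ : {w : ℂ // w ∉ S})})) := ⟨hp1, rfl⟩
    have hev : (Subtype.val ∘ fun p' => if h : q ((Φ p'.2.1.1).symm p'.1.1) ∉ S then
          (⟨(Φ p'.2.1.1).symm p'.1.1, h⟩ : {z : ℂ // q z ∉ S}) else p'.2.1) =ᶠ[nhds p]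
        (fun p' : {w : ℂ // w ∉ S} × ↥(G ⁻¹' {(⟨w, hw⟩ : {w : ℂ // w ∉ S})}) =>
          (Φ p.2.1.1).symm p'.1.1) := by
      filter_upwards [hN.mem_nhds hpN] with p' hp'
      have h2eq : p'.2 = p.2 := hp'.2
      have hsy' := hsymm _ ((memF _).mpr (hfib p'.2)) _ hp'.1
      have hcond : ¬q ((Φ p'.2.1.1).symm p'.1.1) ∈ S := by
        rw [hsy'.2]; exact p'.1.2
      have hcond' : ¬q ((Φ p.2.1.1).symm p'.1.1) ∈ S := by
        rw [← h2eq]; exact hcond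
      simp only [Function.comp_apply, h2eq, dif_pos hcond']
    refine ContinuousAt.congr ?_ hev.symm
    have htarget : (p.1 : {w : ℂ // w ∉ S}).1 ∈ (Φ p.2.1.1).target := by
      obtain ⟨v, hv, hvu⟩ := hWim _ hpF hp1
      rw [← hvu]
      exact (Φ _).map_source (hVsub _ hv)
    have hc2 : ContinuousAt (fun p' : {w : ℂ // w ∉ S} ×
        ↥(G ⁻¹' {(⟨w, hw⟩ : {w : ℂ // w ∉ S})}) => (p'.1.1 : ℂ)) p :=
      (continuous_subtype_val.comp continuous_fst).continuousAt
    exact ContinuousAt.comp (x := p)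
      (g := ((Φ p.2.1.1).symm : ℂ → ℂ))
      (f := fun p' : {w : ℂ // w ∉ S} ×
        ↥(G ⁻¹' {(⟨w, hw⟩ : {w : ℂ // w ∉ S})}) => (p'.1.1 : ℂ))
      ((Φ p.2.1.1).continuousAt_symm htarget) hc2

set_option maxHeartbeats 2000000 in
/-- Let `f ∈ ℂ[z]` be a polynomial of degree `d ≥ 1` and let `S ⊆ ℂ` contain all
critical values of `f`.  Then `z ↦ f(z)`, restricted to a map
`{z : f(z) ∉ S} → ℂ ∖ S`, is a (topological) covering map. -/
theorem polynomial_restriction_isCoveringMap (f : ℂ[X]) (d : ℕ) (hd : 1 ≤ d)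
    (hdeg : f.natDegree = d) (S : Set ℂ)
    (hS : ∀ c : ℂ, (∃ z : ℂ, (Polynomial.derivative f).eval z = 0 ∧ f.eval z = c) → c ∈ S) :
    IsCoveringMap (fun z : {z : ℂ // f.eval z ∉ S} =>
      (⟨f.eval z.1, z.2⟩ : {w : ℂ // w ∉ S})) := by
  classical
  have hdegf : 0 < f.degree := natDegree_pos_iff_degree_pos.mp (by omega)
  intro x
  obtain ⟨w, hw⟩ := x
  -- `w` is not a critical value, so `f'` doesn't vanish on the fiber
  have hderiv : ∀ z : ℂ, f.eval z = w → (derivative f).eval z ≠ 0 := by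
    intro z hz h0
    exact hw (hS w ⟨z, h0, hz⟩)
  have hp0 : f - C w ≠ 0 := by
    intro h
    rw [sub_eq_zero.mp h] at hdegf
    exact absurd hdegf (not_lt.mpr degree_C_le)
  -- the fiber over `w`, as a finset
  set F : Finset ℂ := (f - C w).roots.toFinset with hF
  have memF : ∀ z : ℂ, z ∈ F ↔ f.eval z = w := by
    intro z
    rw [hF, Multiset.mem_toFinset, mem_roots hp0]
    simp [IsRoot, sub_eq_zero]
  -- local homeomorphisms at each fiber point
  have hΦex : ∀ z₀ : ℂ, ∃ e : OpenPartialHomeomorph ℂ ℂ,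
      f.eval z₀ = w → ((∀ z : ℂ, e z = f.eval z) ∧ z₀ ∈ e.source) := by
    intro z₀
    by_cases h : f.eval z₀ = w
    · exact ⟨((f.hasStrictDerivAt z₀).hasStrictFDerivAt_equiv
        (hderiv z₀ h)).toOpenPartialHomeomorph _,
        fun _ => ⟨fun z => rfl, HasStrictFDerivAt.mem_toOpenPartialHomeomorph_source _⟩⟩
    · exact ⟨OpenPartialHomeomorph.refl ℂ, fun h' => absurd h' h⟩
  choose Φ hΦ using hΦex
  -- a radius making balls around fiber points disjoint
  obtain ⟨r, hr0, hrdisj⟩ : ∃ r : ℝ, 0 < r ∧ ∀ a ∈ F, ∀ b ∈ F, a ≠ b →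
      ∀ z : ℂ, z ∈ ball a r → z ∈ ball b r → False := by
    by_cases hFd : F.offDiag.Nonempty
    · obtain ⟨p, hp, hmin⟩ := F.offDiag.exists_min_image (fun p => dist p.1 p.2) hFd
      have hppos : 0 < dist p.1 p.2 := dist_pos.mpr (Finset.mem_offDiag.mp hp).2.2
      refine ⟨dist p.1 p.2 / 2, by linarith, ?_⟩
      intro a ha b hb hab z hza hzb
      have hle : dist p.1 p.2 ≤ dist a b := hmin (a, b) (Finset.mem_offDiag.mpr ⟨ha, hb, hab⟩)
      have h3 := dist_triangle a z b
      rw [mem_ball, dist_comm z a] at hza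
      rw [mem_ball] at hzb
      linarith
    · exact ⟨1, one_pos, fun a ha b hb hab z _ _ =>
        hFd ⟨(a, b), Finset.mem_offDiag.mpr ⟨ha, hb, hab⟩⟩⟩
  -- the disjoint neighborhoods of fiber points
  set V : ℂ → Set ℂ := fun z₀ => (Φ z₀).source ∩ ball z₀ r with hV
  have hVopen : ∀ z₀ : ℂ, IsOpen (V z₀) := fun z₀ => (Φ z₀).open_source.inter isOpen_ball
  have hVsub : ∀ z₀ : ℂ, V z₀ ⊆ (Φ z₀).source := fun z₀ => inter_subset_left
  have hVmem : ∀ z₀ ∈ F, z₀ ∈ V z₀ :=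
    fun z₀ h => ⟨(hΦ z₀ ((memF z₀).mp h)).2, mem_ball_self hr0⟩
  have hΦcoe : ∀ z₀ ∈ F, ∀ z : ℂ, Φ z₀ z = f.eval z :=
    fun z₀ h => (hΦ z₀ ((memF z₀).mp h)).1
  have hVdisj : ∀ a ∈ F, ∀ b ∈ F, a ≠ b → ∀ z : ℂ, z ∈ V a → z ∈ V b → False :=
    fun a ha b hb hab z hza hzb => hrdisj a ha b hb hab z hza.2 hzb.2
  have hVinj : ∀ z₀ ∈ F, Set.InjOn (fun z : ℂ => f.eval z) (V z₀) := by
    intro z₀ h a ha b hb hab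
    apply (Φ z₀).injOn (hVsub z₀ ha) (hVsub z₀ hb)
    rw [hΦcoe z₀ h a, hΦcoe z₀ h b]
    exact hab
  have hVroot : ∀ z₀ ∈ F, ∀ z ∈ V z₀, f.eval z = w → z = z₀ := by
    intro z₀ h z hz hzw
    exact hVinj z₀ h hz (hVmem z₀ h)
      (show f.eval z = f.eval z₀ by rw [(memF z₀).mp h, hzw])
  -- compactness: preimage of a small ball is contained in the union of the `V`s
  obtain ⟨ε, hε0, hεV⟩ : ∃ ε : ℝ, 0 < ε ∧ ∀ z : ℂ, f.eval z ∈ ball w ε →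
      ∃ z₀ ∈ F, z ∈ V z₀ := by
    have hUopen : IsOpen (⋃ z₀ ∈ F, V z₀) := isOpen_biUnion fun z₀ _ => hVopen z₀
    have hroots : ∀ z : ℂ, f.eval z = w → z ∈ ⋃ z₀ ∈ F, V z₀ := fun z hz =>
      Set.mem_biUnion ((memF z).mpr hz) (hVmem z ((memF z).mpr hz))
    have htends : Tendsto (fun z : ℂ => ‖f.eval z‖) (cocompact ℂ) atTop := by
      simpa using f.tendsto_norm_atTop hdegf (z := fun z : ℂ => z)
        tendsto_norm_cocompact_atTop
    obtain ⟨K₀, hK₀c, hK₀⟩ := mem_cocompact.mp (htends.eventually_ge_atTop (‖w‖ + 2))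
    have hKc : IsCompact {z : ℂ | ‖f.eval z - w‖ ≤ 1} := by
      refine hK₀c.of_isClosed_subset (isClosed_le (by fun_prop) continuous_const) ?_
      intro z hz
      by_contra hzK
      have h2 := hK₀ hzK
      simp only [mem_setOf_eq] at h2 hz
      have := norm_sub_norm_le (f.eval z) w
      linarith
    have hK'c : IsCompact ({z : ℂ | ‖f.eval z - w‖ ≤ 1} \ ⋃ z₀ ∈ F, V z₀) := hKc.diff hUopen
    have himc : IsClosed ((fun z => f.eval z) '' ({z : ℂ | ‖f.eval z - w‖ ≤ 1} \ ⋃ z₀ ∈ F, V z₀)) :=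
      (hK'c.image f.continuous).isClosed
    have hwnot : w ∉ (fun z => f.eval z) '' ({z : ℂ | ‖f.eval z - w‖ ≤ 1} \ ⋃ z₀ ∈ F, V z₀) := by
      rintro ⟨z, hz, rfl⟩
      exact hz.2 (hroots z rfl)
    obtain ⟨ε₀, hε₀, hball⟩ := Metric.isOpen_iff.mp himc.isOpen_compl w hwnot
    refine ⟨min ε₀ 1, lt_min hε₀ one_pos, ?_⟩
    intro z hz
    rw [mem_ball] at hz
    have h1 : ‖f.eval z - w‖ < min ε₀ 1 := by rwa [dist_eq_norm] at hz
    by_contra hzU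
    have hzU' : z ∉ ⋃ z₀ ∈ F, V z₀ := fun hmem => by
      obtain ⟨z₀, hz₀, hzV⟩ := Set.mem_iUnion₂.mp hmem
      exact hzU ⟨z₀, hz₀, hzV⟩
    have hzK : z ∈ {z : ℂ | ‖f.eval z - w‖ ≤ 1} \ ⋃ z₀ ∈ F, V z₀ :=
      ⟨le_of_lt (lt_of_lt_of_le h1 (min_le_right _ _)), hzU'⟩
    have h4 : f.eval z ∈ ball w ε₀ := mem_ball.mpr (lt_of_lt_of_le hz (min_le_left _ _))
    exact hball h4 ⟨z, hzK, rfl⟩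
  -- the evenly covered neighborhood `W`
  set W : Set ℂ := ball w ε ∩ ⋂ z₀ ∈ F, (Φ z₀) '' (V z₀) with hWdef
  have hWopen : IsOpen W := isOpen_ball.inter (isOpen_biInter_finset
    fun z₀ h => (Φ z₀).isOpen_image_of_subset_source (hVopen z₀) (hVsub z₀))
  have hwW : w ∈ W := by
    refine ⟨mem_ball_self hε0, ?_⟩
    rw [Set.mem_iInter₂]
    intro z₀ h
    exact ⟨z₀, hVmem z₀ h, by rw [hΦcoe z₀ h z₀]; exact (memF z₀).mp h⟩
  have hWball : W ⊆ ball w ε := inter_subset_left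
  have hWim : ∀ z₀ ∈ F, W ⊆ (Φ z₀) '' (V z₀) := by
    intro z₀ h u hu
    exact Set.mem_iInter₂.mp hu.2 z₀ h
  -- the index of the sheet containing a point of the preimage of `W`
  have hρex : ∀ z : ℂ, ∃ z₀ : ℂ, f.eval z ∈ W →
      (z₀ ∈ F ∧ z ∈ V z₀ ∧ ∀ y ∈ F, z ∈ V y → y = z₀) := by
    intro z
    by_cases h : f.eval z ∈ W
    · obtain ⟨z₀, hz₀F, hz₀V⟩ := hεV z (hWball h)
      refine ⟨z₀, fun _ => ⟨hz₀F, hz₀V, ?_⟩⟩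
      intro y hy hzy
      by_contra hne
      exact hVdisj y hy z₀ hz₀F hne z hzy hz₀V
    · exact ⟨0, fun h' => absurd h' h⟩
  choose ρ hρ using hρex
  obtain ⟨zd, hzd⟩ : ∃ z : ℂ, f.eval z = w := by
    obtain ⟨z, hz⟩ := Complex.exists_root (f := f - C w)
      (by rw [degree_sub_C hdegf]; exact hdegf)
    exact ⟨z, by have := hz; simp only [IsRoot, eval_sub, eval_C, sub_eq_zero] at this; exact this⟩
  exact aux_evenly_covered S (fun z => f.eval z) f.continuous w hw F memF Φ V
    hVopen hVsub hΦcoe hVmem W hWopen hwW hWim ρ hρ zd hzd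
end

section
/- Let n ≥ 2 be an even integer and let s_2, …, s_{n−1} ∈ ℂ be arbitrary. Then the polynomial p(s) = disc_t(t^n + s_2 t^(n−2) + ⋯ + s_{n−1} t + s) ∈ ℂ[s] has degree exactly n − 1 in s, and the polynomial D² − p(s) is irreducible in ℂ[s, D]; in other words, the plane curve D² = disc_t(t^n + s_2 t^(n−2) + ⋯ + s_{n−1} t + s) is geometrically irreducible. -/
/-- The Sylvester matrix of two polynomials `f` and `g`, regarded as having degrees
`m` and `n` respectively. -/
def sylvester {R : Type*} [CommRing R] (f g : Polynomial R) (m n : ℕ) :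
    Matrix (Fin (n + m)) (Fin (n + m)) R :=
  Matrix.of fun i j =>
    if (i : ℕ) < n then
      (if (i : ℕ) ≤ (j : ℕ) ∧ (j : ℕ) ≤ (i : ℕ) + m then f.coeff (m + i - j) else 0)
    else
      (if (i : ℕ) - n ≤ (j : ℕ) ∧ (j : ℕ) ≤ ((i : ℕ) - n) + n then
        g.coeff (n + ((i : ℕ) - n) - j) else 0)

/-- The resultant `Res(f, g)`: the determinant of the Sylvester matrix of `f` and `g`. -/
noncomputable def resultant {R : Type*} [CommRing R] (f g : Polynomial R) : R :=
  (sylvester f g f.natDegree g.natDegree).det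

/-- The discriminant `disc f = (−1)^(m(m−1)/2) · Res(f, f′)` of a polynomial `f` of
degree `m`. -/
noncomputable def polyDisc {R : Type*} [CommRing R] (f : Polynomial R) : R :=
  (-1) ^ (f.natDegree * (f.natDegree - 1) / 2) * resultant f (Polynomial.derivative f)

namespace EvenFiberAux

open Polynomial Finset

/-- The polynomial `tⁿ + s₂ tⁿ⁻² + ⋯ + s_{n−1} t + s`. -/
noncomputable def F (n : ℕ) (a : Fin (n - 2) → ℂ) : Polynomial (Polynomial ℂ) :=
  (Polynomial.X : Polynomial (Polynomial ℂ)) ^ n +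
    ∑ i : Fin (n - 2),
      Polynomial.C (Polynomial.C (a i)) *
        (Polynomial.X : Polynomial (Polynomial ℂ)) ^ (n - ((i : ℕ) + 2)) +
    Polynomial.C (Polynomial.X : Polynomial ℂ)

variable {n : ℕ} {a : Fin (n - 2) → ℂ}

lemma coeff_F_n (hn : 2 ≤ n) (a : Fin (n - 2) → ℂ) : (F n a).coeff n = 1 := by
  have h1 : ((X : Polynomial (Polynomial ℂ)) ^ n).coeff n = 1 := by simp [coeff_X_pow]
  have h2 : (∑ i : Fin (n - 2), C (C (a i)) *
      (X : Polynomial (Polynomial ℂ)) ^ (n - ((i : ℕ) + 2))).coeff n = 0 := by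
    rw [finset_sum_coeff]
    refine Finset.sum_eq_zero fun i _ => ?_
    have hi := i.isLt
    have : n ≠ n - ((i : ℕ) + 2) := by omega
    simp [coeff_C_mul, coeff_X_pow, this]
  have h3 : ((C (X : Polynomial ℂ)) : Polynomial (Polynomial ℂ)).coeff n = 0 := by
    rw [coeff_C, if_neg (by omega)]
  simp [F, coeff_add, h1, h2, h3]

lemma coeff_F_zero (hn : 2 ≤ n) (a : Fin (n - 2) → ℂ) : (F n a).coeff 0 = X := by
  have h1 : ((X : Polynomial (Polynomial ℂ)) ^ n).coeff 0 = 0 := by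
    rw [coeff_X_pow, if_neg (by omega)]
  have h2 : (∑ i : Fin (n - 2), C (C (a i)) *
      (X : Polynomial (Polynomial ℂ)) ^ (n - ((i : ℕ) + 2))).coeff 0 = 0 := by
    rw [finset_sum_coeff]
    refine Finset.sum_eq_zero fun i _ => ?_
    have hi := i.isLt
    have : (0 : ℕ) ≠ n - ((i : ℕ) + 2) := by omega
    simp [coeff_C_mul, coeff_X_pow, this]
  have h3 : ((C (X : Polynomial ℂ)) : Polynomial (Polynomial ℂ)).coeff 0 = X := coeff_C_zero
  simp [F, coeff_add, h1, h2, h3]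

lemma coeff_F_C (a : Fin (n - 2) → ℂ) {k : ℕ} (hk : k ≠ 0) :
    ∃ z : ℂ, (F n a).coeff k = C z := by
  suffices h : (F n a).coeff k ∈ (C : ℂ →+* Polynomial ℂ).range by
    obtain ⟨z, hz⟩ := h; exact ⟨z, hz.symm⟩
  rw [F, coeff_add, coeff_add]
  refine Subring.add_mem _ (Subring.add_mem _ ?_ ?_) ?_
  · rw [coeff_X_pow]
    split
    · exact ⟨1, map_one _⟩
    · exact ⟨0, map_zero _⟩
  · rw [finset_sum_coeff]
    refine Subring.sum_mem _ fun i _ => ?_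
    rw [coeff_C_mul, coeff_X_pow]
    split
    · exact ⟨a i, by simp⟩
    · exact ⟨0, by simp⟩
  · rw [coeff_C, if_neg hk]
    exact ⟨0, map_zero _⟩

lemma degree_F (hn : 2 ≤ n) (a : Fin (n - 2) → ℂ) : (F n a).degree = n := by
  have hX : ((X : Polynomial (Polynomial ℂ)) ^ n).degree = n := degree_X_pow n
  have h2 : (∑ i : Fin (n - 2), C (C (a i)) *
      (X : Polynomial (Polynomial ℂ)) ^ (n - ((i : ℕ) + 2))).degree < n := by
    refine lt_of_le_of_lt (degree_sum_le _ _) ?_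
    rw [Finset.sup_lt_iff (by exact_mod_cast WithBot.bot_lt_coe n)]
    intro i _
    refine lt_of_le_of_lt (degree_C_mul_X_pow_le _ _) ?_
    have hi := i.isLt
    exact_mod_cast WithBot.coe_lt_coe.mpr (by omega : n - ((i : ℕ) + 2) < n)
  have h12 : ((X : Polynomial (Polynomial ℂ)) ^ n +
      ∑ i : Fin (n - 2), C (C (a i)) *
        (X : Polynomial (Polynomial ℂ)) ^ (n - ((i : ℕ) + 2))).degree = n := by
    rw [degree_add_eq_left_of_degree_lt (by rw [hX]; exact h2), hX]
  have h3 : ((C (X : Polynomial ℂ)) : Polynomial (Polynomial ℂ)).degree < n := by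
    refine lt_of_le_of_lt (degree_C_le) ?_
    exact_mod_cast WithBot.coe_lt_coe.mpr (by omega : 0 < n)
  rw [F, degree_add_eq_left_of_degree_lt (by rw [h12]; exact h3), h12]

lemma natDegree_F (hn : 2 ≤ n) (a : Fin (n - 2) → ℂ) : (F n a).natDegree = n :=
  natDegree_eq_of_degree_eq_some (degree_F hn a)

lemma coeff_G_C (hn : 2 ≤ n) (a : Fin (n - 2) → ℂ) (k : ℕ) :
    ∃ z : ℂ, (derivative (F n a)).coeff k = C z := by
  obtain ⟨z, hz⟩ := coeff_F_C a (Nat.succ_ne_zero k)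
  refine ⟨z * ((k : ℂ) + 1), ?_⟩
  rw [coeff_derivative, hz, map_mul, map_add, map_natCast, map_one]

lemma coeff_G_top (hn : 2 ≤ n) (a : Fin (n - 2) → ℂ) :
    (derivative (F n a)).coeff (n - 1) = C (n : ℂ) := by
  rw [coeff_derivative]
  have h : n - 1 + 1 = n := by omega
  rw [h, coeff_F_n hn a, one_mul]
  rw [show ((n - 1 : ℕ) : Polynomial ℂ) + 1 = ((n : ℕ) : Polynomial ℂ) by
    rw [← Nat.cast_succ, show (n-1).succ = n by omega]]
  rw [map_natCast]

lemma natDegree_G (hn : 2 ≤ n) (a : Fin (n - 2) → ℂ) :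
    (derivative (F n a)).natDegree = n - 1 := by
  have hle : (derivative (F n a)).natDegree ≤ n - 1 := by
    refine le_trans (natDegree_derivative_le _) ?_
    rw [natDegree_F hn a]
  have hne : (derivative (F n a)).coeff (n - 1) ≠ 0 := by
    rw [coeff_G_top hn a, Ne, C_eq_zero, Nat.cast_eq_zero]
    omega
  exact le_antisymm hle (le_natDegree_of_ne_zero hne)

/-- The relevant Sylvester matrix. -/
noncomputable def M (n : ℕ) (a : Fin (n - 2) → ℂ) :
    Matrix (Fin ((n - 1) + n)) (Fin ((n - 1) + n)) (Polynomial ℂ) :=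
  sylvester (F n a) (derivative (F n a)) n (n - 1)

lemma M_unit (hn : 2 ≤ n) (a : Fin (n - 2) → ℂ) (i j : Fin ((n - 1) + n))
    (hj : (j : ℕ) = (i : ℕ) + n) : M n a i j = X := by
  have hjlt := j.isLt
  have hi : (i : ℕ) < n - 1 := by omega
  rw [M, _root_.sylvester, Matrix.of_apply, if_pos hi, if_pos ⟨by omega, by omega⟩]
  rw [show n + (i : ℕ) - (j : ℕ) = 0 by omega]
  exact coeff_F_zero hn a

lemma M_const (hn : 2 ≤ n) (a : Fin (n - 2) → ℂ) (i j : Fin ((n - 1) + n))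
    (hj : (j : ℕ) ≠ (i : ℕ) + n) : ∃ z : ℂ, M n a i j = C z := by
  rw [M, _root_.sylvester, Matrix.of_apply]
  split
  · split
    · exact coeff_F_C a (by omega)
    · exact ⟨0, (map_zero C).symm⟩
  · split
    · exact coeff_G_C hn a _
    · exact ⟨0, (map_zero C).symm⟩

lemma M_zero (hn : 2 ≤ n) (a : Fin (n - 2) → ℂ) (i j : Fin ((n - 1) + n))
    (hi : ¬ ((i : ℕ) < n - 1)) (hij : ¬ ((i : ℕ) - (n - 1) ≤ (j : ℕ) ∧ (j : ℕ) ≤ ((i : ℕ) - (n - 1)) + (n - 1))) :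
    M n a i j = 0 := by
  rw [M, _root_.sylvester, Matrix.of_apply, if_neg hi, if_neg hij]

lemma M_diag (hn : 2 ≤ n) (a : Fin (n - 2) → ℂ) (i j : Fin ((n - 1) + n))
    (hij : (i : ℕ) = (j : ℕ) + (n - 1)) : M n a i j = C (n : ℂ) := by
  rw [M, _root_.sylvester, Matrix.of_apply, if_neg (by omega), if_pos ⟨by omega, by omega⟩]
  rw [show (n - 1) + ((i : ℕ) - (n - 1)) - (j : ℕ) = n - 1 by omega]
  exact coeff_G_top hn a

section Perm

variable (hn : 2 ≤ n)

lemma sum_range_ite_ge (k m : ℕ) :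
    (∑ j ∈ Finset.range m, if k ≤ j then (1 : ℕ) else 0) = m - k := by
  induction m with
  | zero => simp
  | succ m ih => rw [Finset.sum_range_succ, ih]; split <;> omega

lemma sum_range_ite_lt (k m : ℕ) :
    (∑ j ∈ Finset.range m, if j < k then (1 : ℕ) else 0) = min k m := by
  induction m with
  | zero => simp
  | succ m ih => rw [Finset.sum_range_succ, ih]; split <;> omega

lemma sum_ind_ge (hn : 2 ≤ n) :
    (∑ c : Fin ((n - 1) + n), if n ≤ (c : ℕ) then (1 : ℕ) else 0) = n - 1 := by
  rw [Fin.sum_univ_eq_sum_range (fun k => if n ≤ k then (1:ℕ) else 0), sum_range_ite_ge]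
  omega

end Perm


section Sigma0

open Fin.NatCast

lemma sigma0_val (hn : 2 ≤ n) [NeZero ((n - 1) + n)] (c : Fin ((n - 1) + n)) :
    ((Equiv.addRight (((n - 1 : ℕ)) : Fin ((n - 1) + n)) c : Fin ((n - 1) + n)) : ℕ)
      = if (c : ℕ) < n then (c : ℕ) + (n - 1) else (c : ℕ) - n := by
  have hc := c.isLt
  have hval : ((((n - 1 : ℕ)) : Fin ((n - 1) + n)) : ℕ) = n - 1 := by
    rw [Fin.val_natCast]; exact Nat.mod_eq_of_lt (by omega)
  rw [Equiv.coe_addRight, Fin.val_add, hval]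
  split
  · exact Nat.mod_eq_of_lt (by omega)
  · rw [Nat.mod_eq_sub_mod (by omega), Nat.mod_eq_of_lt (by omega)]
    omega

lemma M_sigma0 (hn : 2 ≤ n) [NeZero ((n - 1) + n)] (a : Fin (n - 2) → ℂ)
    (c : Fin ((n - 1) + n)) :
    M n a (Equiv.addRight (((n - 1 : ℕ)) : Fin ((n - 1) + n)) c) c
      = if (c : ℕ) < n then C (n : ℂ) else X := by
  have hval := sigma0_val hn c
  have hc := c.isLt
  split
  · next h => exact M_diag hn a _ _ (by rw [hval, if_pos h])
  · next h => exact M_unit hn a _ _ (by rw [hval, if_neg h]; omega)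

lemma natDegree_entry_le (hn : 2 ≤ n) (a : Fin (n - 2) → ℂ) (i j : Fin ((n - 1) + n)) :
    (M n a i j).natDegree ≤ if (j : ℕ) = (i : ℕ) + n then 1 else 0 := by
  split
  · next h => rw [M_unit hn a i j h, natDegree_X]
  · next h =>
      obtain ⟨z, hz⟩ := M_const hn a i j h
      rw [hz, natDegree_C]

lemma natDegree_prod_perm_le (hn : 2 ≤ n) (a : Fin (n - 2) → ℂ)
    (σ : Equiv.Perm (Fin ((n - 1) + n))) :
    (∏ c, M n a (σ c) c).natDegree
      ≤ ∑ c : Fin ((n - 1) + n), if (c : ℕ) = ((σ c : Fin ((n - 1) + n)) : ℕ) + n then 1 else 0 :=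
  le_trans (Polynomial.natDegree_prod_le _ _)
    (Finset.sum_le_sum fun c _ => natDegree_entry_le hn a (σ c) c)

lemma sum_ind_le (hn : 2 ≤ n) (σ : Equiv.Perm (Fin ((n - 1) + n))) :
    (∑ c : Fin ((n - 1) + n), if (c : ℕ) = ((σ c : Fin ((n - 1) + n)) : ℕ) + n then (1 : ℕ) else 0)
      ≤ n - 1 := by
  calc (∑ c : Fin ((n - 1) + n), if (c : ℕ) = ((σ c : Fin ((n - 1) + n)) : ℕ) + n then (1:ℕ) else 0)
      ≤ ∑ c : Fin ((n - 1) + n), if n ≤ (c : ℕ) then (1:ℕ) else 0 :=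
        Finset.sum_le_sum fun c _ => by split <;> split <;> omega
    _ = n - 1 := sum_ind_ge hn

lemma sum_ind_lt (hn : 2 ≤ n) (σ : Equiv.Perm (Fin ((n - 1) + n))) (c0 : Fin ((n - 1) + n))
    (h0 : n ≤ (c0 : ℕ)) (hne : (c0 : ℕ) ≠ ((σ c0 : Fin ((n - 1) + n)) : ℕ) + n) :
    (∑ c : Fin ((n - 1) + n), if (c : ℕ) = ((σ c : Fin ((n - 1) + n)) : ℕ) + n then (1 : ℕ) else 0)
      ≤ n - 2 := by
  have h1 := Finset.add_sum_erase Finset.univ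
    (fun c : Fin ((n - 1) + n) => if (c : ℕ) = ((σ c : Fin ((n - 1) + n)) : ℕ) + n then (1:ℕ) else 0)
    (Finset.mem_univ c0)
  have h2 := Finset.add_sum_erase Finset.univ
    (fun c : Fin ((n - 1) + n) => if n ≤ (c : ℕ) then (1:ℕ) else 0) (Finset.mem_univ c0)
  rw [sum_ind_ge hn] at h2
  simp only [if_pos h0] at h2
  simp only [if_neg hne, zero_add] at h1
  have h3 : (∑ c ∈ Finset.univ.erase c0,
        if (c : ℕ) = ((σ c : Fin ((n - 1) + n)) : ℕ) + n then (1:ℕ) else 0)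
      ≤ ∑ c ∈ Finset.univ.erase c0, if n ≤ (c : ℕ) then (1:ℕ) else 0 :=
    Finset.sum_le_sum fun c _ => by split <;> split <;> omega
  omega

lemma perm_eq_sigma0 (hn : 2 ≤ n) [NeZero ((n - 1) + n)] (a : Fin (n - 2) → ℂ)
    (σ : Equiv.Perm (Fin ((n - 1) + n)))
    (hcols : ∀ c : Fin ((n - 1) + n), n ≤ (c : ℕ) → (c : ℕ) = ((σ c : Fin ((n - 1) + n)) : ℕ) + n)
    (hnz : ∀ c, M n a (σ c) c ≠ 0) :
    σ = Equiv.addRight (((n - 1 : ℕ)) : Fin ((n - 1) + n)) := by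
  have key : ∀ k, k < n → ∀ c : Fin ((n - 1) + n), (c : ℕ) = k →
      ((σ c : Fin ((n - 1) + n)) : ℕ) = k + (n - 1) := by
    intro k
    induction k using Nat.strong_induction_on with
    | _ k IH =>
      intro hk c hc
      have hclt := c.isLt
      have hσlt := (σ c).isLt
      have hge : n - 1 ≤ ((σ c : Fin ((n - 1) + n)) : ℕ) := by
        by_contra hcon
        push_neg at hcon
        have hr : ((σ c : Fin ((n - 1) + n)) : ℕ) + n < (n - 1) + n := by omega
        have hcol := hcols ⟨((σ c : Fin ((n - 1) + n)) : ℕ) + n, hr⟩ (Nat.le_add_left n _)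
        have hmk : ((⟨((σ c : Fin ((n - 1) + n)) : ℕ) + n, hr⟩ : Fin ((n - 1) + n)) : ℕ)
            = ((σ c : Fin ((n - 1) + n)) : ℕ) + n := rfl
        rw [hmk] at hcol
        have heq : σ (⟨((σ c : Fin ((n - 1) + n)) : ℕ) + n, hr⟩ : Fin ((n - 1) + n)) = σ c :=
          Fin.val_injective (by omega)
        have h2 := σ.injective heq
        have h3 : ((⟨((σ c : Fin ((n - 1) + n)) : ℕ) + n, hr⟩ : Fin ((n - 1) + n)) : ℕ) = (c : ℕ) :=
          congrArg Fin.val h2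
        rw [hmk] at h3
        omega
      have hub : ((σ c : Fin ((n - 1) + n)) : ℕ) ≤ k + (n - 1) := by
        by_contra hcon
        push_neg at hcon
        exact hnz c (M_zero hn a (σ c) c (by omega) (by omega))
      rcases Nat.lt_or_ge (((σ c : Fin ((n - 1) + n)) : ℕ) - (n - 1)) k with hjk | hjk
      · exfalso
        have hjlt : ((σ c : Fin ((n - 1) + n)) : ℕ) - (n - 1) < (n - 1) + n := by omega
        have hIH := IH _ hjk (by omega) ⟨((σ c : Fin ((n - 1) + n)) : ℕ) - (n - 1), hjlt⟩ rfl
        have heq : σ (⟨((σ c : Fin ((n - 1) + n)) : ℕ) - (n - 1), hjlt⟩ : Fin ((n - 1) + n)) = σ c :=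
          Fin.val_injective (by omega)
        have h2 := σ.injective heq
        have h3 : ((⟨((σ c : Fin ((n - 1) + n)) : ℕ) - (n - 1), hjlt⟩ : Fin ((n - 1) + n)) : ℕ)
            = (c : ℕ) := congrArg Fin.val h2
        have hmk2 : ((⟨((σ c : Fin ((n - 1) + n)) : ℕ) - (n - 1), hjlt⟩ : Fin ((n - 1) + n)) : ℕ)
            = ((σ c : Fin ((n - 1) + n)) : ℕ) - (n - 1) := rfl
        rw [hmk2] at h3
        omega
      · omega
  apply Equiv.ext
  intro c
  have hc := c.isLt
  have hs0 := sigma0_val hn (n := n) c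
  rcases Nat.lt_or_ge (c : ℕ) n with h | h
  · exact Fin.val_injective (by rw [hs0, if_pos h, key (c : ℕ) h c rfl])
  · refine Fin.val_injective ?_
    rw [hs0, if_neg (by omega)]
    have := hcols c h
    omega

lemma prod_sigma0 (hn : 2 ≤ n) [NeZero ((n - 1) + n)] (a : Fin (n - 2) → ℂ) :
    (∏ c, M n a (Equiv.addRight (((n - 1 : ℕ)) : Fin ((n - 1) + n)) c) c)
      = C ((n : ℂ)) ^ n * X ^ (n - 1) := by
  rw [Finset.prod_congr rfl fun c _ => M_sigma0 hn a c, Finset.prod_ite,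
    Finset.prod_const, Finset.prod_const]
  have hcard1 : (Finset.univ.filter fun c : Fin ((n - 1) + n) => (c : ℕ) < n).card = n := by
    rw [Finset.card_filter, Fin.sum_univ_eq_sum_range (fun k => if k < n then (1:ℕ) else 0),
      sum_range_ite_lt]
    omega
  have hcard2 : (Finset.univ.filter fun c : Fin ((n - 1) + n) => ¬ ((c : ℕ) < n)).card = n - 1 := by
    rw [Finset.card_filter]
    have : ∀ c : Fin ((n - 1) + n), (if ¬ ((c : ℕ) < n) then (1:ℕ) else 0)
        = if n ≤ (c : ℕ) then (1:ℕ) else 0 := fun c => by split <;> split <;> omega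
    rw [Finset.sum_congr rfl fun c _ => this c, sum_ind_ge hn]
  rw [hcard1, hcard2]

lemma coeff_det_M (hn : 2 ≤ n) [NeZero ((n - 1) + n)] (a : Fin (n - 2) → ℂ) :
    ((M n a).det).coeff (n - 1)
      = (((Equiv.Perm.sign (Equiv.addRight (((n - 1 : ℕ)) : Fin ((n - 1) + n))) : ℤ) : ℂ))
          * (n : ℂ) ^ n := by
  rw [Matrix.det_apply', finset_sum_coeff]
  rw [Finset.sum_eq_single (Equiv.addRight (((n - 1 : ℕ)) : Fin ((n - 1) + n)))]
  · rw [prod_sigma0 hn a,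
      ← map_intCast (C : ℂ →+* Polynomial ℂ) ((Equiv.Perm.sign
        (Equiv.addRight (((n - 1 : ℕ)) : Fin ((n - 1) + n))) : ℤ)),
      ← map_pow, ← mul_assoc, ← map_mul, coeff_C_mul, coeff_X_pow, if_pos rfl, mul_one]
  · intro σ _ hσne
    by_cases hall : ∀ c : Fin ((n - 1) + n), n ≤ (c : ℕ) →
        (c : ℕ) = ((σ c : Fin ((n - 1) + n)) : ℕ) + n
    · by_cases hz : ∀ c, M n a (σ c) c ≠ 0
      · exact absurd (perm_eq_sigma0 hn a σ hall hz) hσne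
      · push_neg at hz
        obtain ⟨c, hc⟩ := hz
        rw [Finset.prod_eq_zero (f := fun i => M n a (σ i) i) (Finset.mem_univ c) hc,
          mul_zero, coeff_zero]
    · push_neg at hall
      obtain ⟨c0, h0, hne⟩ := hall
      refine coeff_eq_zero_of_natDegree_lt (lt_of_le_of_lt ?_ (by omega : n - 2 < n - 1))
      refine le_trans natDegree_mul_le ?_
      rw [natDegree_intCast, zero_add]
      exact le_trans (natDegree_prod_perm_le hn a σ) (sum_ind_lt hn σ c0 h0 hne)
  · intro h
    exact absurd (Finset.mem_univ _) h

lemma coeff_det_M_ne_zero (hn : 2 ≤ n) [NeZero ((n - 1) + n)] (a : Fin (n - 2) → ℂ) :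
    ((M n a).det).coeff (n - 1) ≠ 0 := by
  rw [coeff_det_M hn a]
  refine mul_ne_zero ?_ (pow_ne_zero _ (Nat.cast_ne_zero.mpr (by omega)))
  rcases Int.units_eq_one_or (Equiv.Perm.sign (Equiv.addRight (((n - 1 : ℕ)) : Fin ((n - 1) + n))))
    with h | h <;> rw [h] <;> norm_num

lemma natDegree_det_M_le (hn : 2 ≤ n) (a : Fin (n - 2) → ℂ) :
    ((M n a).det).natDegree ≤ n - 1 := by
  rw [Matrix.det_apply']
  refine Polynomial.natDegree_sum_le_of_forall_le _ _ fun σ _ => ?_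
  refine le_trans natDegree_mul_le ?_
  rw [natDegree_intCast, zero_add]
  exact le_trans (natDegree_prod_perm_le hn a σ) (sum_ind_le hn σ)

lemma degree_det_M (hn : 2 ≤ n) [NeZero ((n - 1) + n)] (a : Fin (n - 2) → ℂ) :
    ((M n a).det).degree = ((n - 1 : ℕ) : WithBot ℕ) := by
  have hne : (M n a).det ≠ 0 := fun h => coeff_det_M_ne_zero hn a (by rw [h, coeff_zero])
  have h1 : ((M n a).det).natDegree = n - 1 :=
    le_antisymm (natDegree_det_M_le hn a) (le_natDegree_of_ne_zero (coeff_det_M_ne_zero hn a))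
  rw [degree_eq_natDegree hne, h1]

end Sigma0

lemma degree_resultant (hn : 2 ≤ n) (a : Fin (n - 2) → ℂ) :
    (_root_.resultant (F n a) (derivative (F n a))).degree = ((n - 1 : ℕ) : WithBot ℕ) := by
  haveI : NeZero ((n - 1) + n) := ⟨by omega⟩
  have hF := natDegree_F hn a
  have hG := natDegree_G hn a
  rw [_root_.resultant, hF, hG]
  exact degree_det_M hn a

lemma degree_polyDisc (hn : 2 ≤ n) (a : Fin (n - 2) → ℂ) :
    (polyDisc (F n a)).degree = ((n - 1 : ℕ) : WithBot ℕ) := by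
  rw [polyDisc]
  have h : ((-1 : Polynomial ℂ)) ^ ((F n a).natDegree * ((F n a).natDegree - 1) / 2)
      = C ((-1 : ℂ) ^ ((F n a).natDegree * ((F n a).natDegree - 1) / 2)) := by
    rw [map_pow, map_neg, map_one]
  rw [h, degree_C_mul (pow_ne_zero _ (by norm_num : (-1 : ℂ) ≠ 0))]
  exact degree_resultant hn a

end EvenFiberAux


/-- Let `n ≥ 2` be even and `s₂, …, s_{n−1} ∈ ℂ` arbitrary.  Then
`p(s) = disc_t(tⁿ + s₂ tⁿ⁻² + ⋯ + s_{n−1} t + s) ∈ ℂ[s]` has degree exactly `n − 1`, and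
`D² − p(s)` is irreducible in `ℂ[s][D]`; that is, the plane curve
`D² = disc_t(tⁿ + s₂ tⁿ⁻² + ⋯ + s_{n−1} t + s)` is geometrically irreducible.
(Here `a : Fin (n−2) → ℂ` encodes the tuple via `a i = s_{i+2}`.) -/
theorem even_degree_fiber_irreducible (n : ℕ) (hn : 2 ≤ n) (heven : Even n)
    (a : Fin (n - 2) → ℂ) :
    (polyDisc
        ((Polynomial.X : Polynomial (Polynomial ℂ)) ^ n +
          ∑ i : Fin (n - 2),
            Polynomial.C (Polynomial.C (a i)) *
              (Polynomial.X : Polynomial (Polynomial ℂ)) ^ (n - ((i : ℕ) + 2)) +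
          Polynomial.C (Polynomial.X : Polynomial ℂ))).degree = ((n - 1 : ℕ) : WithBot ℕ) ∧
    Irreducible ((Polynomial.X : Polynomial (Polynomial ℂ)) ^ 2 -
      Polynomial.C (polyDisc
        ((Polynomial.X : Polynomial (Polynomial ℂ)) ^ n +
          ∑ i : Fin (n - 2),
            Polynomial.C (Polynomial.C (a i)) *
              (Polynomial.X : Polynomial (Polynomial ℂ)) ^ (n - ((i : ℕ) + 2)) +
          Polynomial.C (Polynomial.X : Polynomial ℂ)))) := by
  have hdeg : (polyDisc (EvenFiberAux.F n a)).degree = ((n - 1 : ℕ) : WithBot ℕ) :=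
    EvenFiberAux.degree_polyDisc hn a
  constructor
  · exact hdeg
  · set p := polyDisc (EvenFiberAux.F n a) with hp
    have hmon : (Polynomial.X ^ 2 - Polynomial.C p : Polynomial (Polynomial ℂ)).Monic :=
      Polynomial.monic_X_pow_sub_C p (by norm_num)
    have hinj := IsFractionRing.injective (Polynomial ℂ) (FractionRing (Polynomial ℂ))
    have hpx : p.natDegree = n - 1 := Polynomial.natDegree_eq_of_degree_eq_some hdeg
    have hirrK : Irreducible ((Polynomial.X ^ 2 - Polynomial.C p).map
        (algebraMap (Polynomial ℂ) (FractionRing (Polynomial ℂ)))) := by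
      rw [Polynomial.map_sub, Polynomial.map_pow, Polynomial.map_X, Polynomial.map_C]
      refine X_pow_sub_C_irreducible_of_prime Nat.prime_two ?_
      intro b hb
      have hint : IsIntegral (Polynomial ℂ) b := by
        refine ⟨Polynomial.X ^ 2 - Polynomial.C p,
          Polynomial.monic_X_pow_sub_C p (by norm_num), ?_⟩
        rw [Polynomial.eval₂_sub, Polynomial.eval₂_C, Polynomial.eval₂_pow, Polynomial.eval₂_X,
          hb, sub_self]
      obtain ⟨q, hq⟩ := IsIntegrallyClosed.isIntegral_iff.mp hint
      have h2 : algebraMap (Polynomial ℂ) (FractionRing (Polynomial ℂ)) (q ^ 2)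
          = algebraMap (Polynomial ℂ) (FractionRing (Polynomial ℂ)) p := by
        rw [map_pow, hq, hb]
      have h3 : q ^ 2 = p := hinj h2
      have h4 : p.natDegree = 2 * q.natDegree := by
        rw [← h3, Polynomial.natDegree_pow]
      obtain ⟨k, hk⟩ := heven
      omega
    exact Polynomial.Monic.irreducible_of_irreducible_map
      (algebraMap (Polynomial ℂ) (FractionRing (Polynomial ℂ))) _ hmon hirrK
end
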